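/- arXiv:0812.2724 — 6 statements merged into one kernel-verified Lean document; each statement's English description precedes it below -/
import Mathlib

section
/- Let P_h and P_v be the horizontal and vertical transition matrices of a nearest-neighbor Markov chain on the grid {0,...,m}×{0,...,n}, with entries L_{i,j}, R_{i,j}, D_{i,j}, U_{i,j}. Then P_h P_v = P_v P_h if and only if for all (i,j) with 0 ≤ i ≤ m−1 and 0 ≤ j ≤ n−1: U_{i,j}R_{i,j+1} = R_{i,j}U_{i+1,j}, D_{i,j+1}R_{i,j} = R_{i,j+1}D_{i+1,j+1}, D_{i+1,j+1}L_{i+1,j} = L_{i+1,j+1}D_{i,j+1}, and U_{i+1,j}L_{i+1,j+1} = L_{i+1,j}U_{i,j}. -/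
/-- On the grid `{0,...,m} × {0,...,n}`, the horizontal transition
matrix `Ph` (entries `R`, `L`) and the vertical transition matrix `Pv` (entries `U`, `D`)
commute iff the four relations (2.1) hold on every unit square. -/
theorem commute_iff_square_relations (m n : ℕ) (L R D U : ℕ → ℕ → ℝ)
    (Ph Pv : Matrix (Fin (m+1) × Fin (n+1)) (Fin (m+1) × Fin (n+1)) ℝ)
    (hPh : Ph = fun p q =>
      if (q.1 : ℕ) = (p.1 : ℕ) + 1 ∧ q.2 = p.2 then R p.1 p.2
      else if (p.1 : ℕ) = (q.1 : ℕ) + 1 ∧ q.2 = p.2 then L p.1 p.2 else 0)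
    (hPv : Pv = fun p q =>
      if (q.2 : ℕ) = (p.2 : ℕ) + 1 ∧ q.1 = p.1 then U p.1 p.2
      else if (p.2 : ℕ) = (q.2 : ℕ) + 1 ∧ q.1 = p.1 then D p.1 p.2 else 0) :
    Ph * Pv = Pv * Ph ↔
      ∀ i j : ℕ, i < m → j < n →
        U i j * R i (j+1) = R i j * U (i+1) j ∧
        D i (j+1) * R i j = R i (j+1) * D (i+1) (j+1) ∧
        D (i+1) (j+1) * L (i+1) j = L (i+1) (j+1) * D i (j+1) ∧
        U (i+1) j * L (i+1) (j+1) = L (i+1) j * U i j := by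
  have entryH : ∀ p q : Fin (m+1) × Fin (n+1),
      (Ph * Pv) p q = Ph p (q.1, p.2) * Pv (q.1, p.2) q := by
    intro p q
    rw [Matrix.mul_apply]
    apply Finset.sum_eq_single
    · intro r _ hr
      by_cases h1 : r.1 = q.1
      · have h2 : r.2 ≠ p.2 := fun h2 => hr (by rw [Prod.ext_iff]; exact ⟨h1, h2⟩)
        have hz : Ph p r = 0 := by simp [hPh, h2]
        rw [hz, zero_mul]
      · have hz : Pv r q = 0 := by simp [hPv, Ne.symm h1]
        rw [hz, mul_zero]
    · intro h; exact absurd (Finset.mem_univ _) h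
  have entryV : ∀ p q : Fin (m+1) × Fin (n+1),
      (Pv * Ph) p q = Pv p (p.1, q.2) * Ph (p.1, q.2) q := by
    intro p q
    rw [Matrix.mul_apply]
    apply Finset.sum_eq_single
    · intro r _ hr
      by_cases h1 : r.1 = p.1
      · have h2 : r.2 ≠ q.2 := fun h2 => hr (by rw [Prod.ext_iff]; exact ⟨h1, h2⟩)
        have hz : Ph r q = 0 := by simp [hPh, Ne.symm h2]
        rw [hz, mul_zero]
      · have hz : Pv p r = 0 := by simp [hPv, h1]
        rw [hz, zero_mul]
    · intro h; exact absurd (Finset.mem_univ _) h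
  constructor
  · intro h i j hi hj
    have G : ∀ p q : Fin (m+1) × Fin (n+1),
        Ph p (q.1, p.2) * Pv (q.1, p.2) q = Pv p (p.1, q.2) * Ph (p.1, q.2) q := by
      intro p q
      rw [← entryH, ← entryV, h]
    refine ⟨?_, ?_, ?_, ?_⟩
    · have := G (⟨i, by omega⟩, ⟨j, by omega⟩) (⟨i+1, by omega⟩, ⟨j+1, by omega⟩)
      simp only [hPh, hPv] at this
      simp [show ¬ i = i + 1 + 1 by omega, show ¬ j = j + 1 + 1 by omega] at this
      linarith
    · have := G (⟨i, by omega⟩, ⟨j+1, by omega⟩) (⟨i+1, by omega⟩, ⟨j, by omega⟩)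
      simp only [hPh, hPv] at this
      simp [show ¬ i = i + 1 + 1 by omega, show ¬ j = j + 1 + 1 by omega] at this
      linarith
    · have := G (⟨i+1, by omega⟩, ⟨j+1, by omega⟩) (⟨i, by omega⟩, ⟨j, by omega⟩)
      simp only [hPh, hPv] at this
      simp [show ¬ i = i + 1 + 1 by omega, show ¬ j = j + 1 + 1 by omega] at this
      linarith
    · have := G (⟨i+1, by omega⟩, ⟨j, by omega⟩) (⟨i, by omega⟩, ⟨j+1, by omega⟩)
      simp only [hPh, hPv] at this
      simp [show ¬ i = i + 1 + 1 by omega, show ¬ j = j + 1 + 1 by omega] at this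
      linarith
  · intro rel
    ext p q
    rw [entryH, entryV]
    obtain ⟨⟨a, ha⟩, ⟨b, hb⟩⟩ := p
    obtain ⟨⟨c, hc⟩, ⟨d, hd⟩⟩ := q
    simp only [hPh, hPv]
    by_cases h1 : c = a + 1
    · have h2 : ¬ a = c + 1 := by omega
      by_cases h3 : d = b + 1
      · have h4 : ¬ b = d + 1 := by omega
        subst h1; subst h3
        have e := rel a b (by omega) (by omega)
        simp [h2, h4]
        linarith [e.1]
      · by_cases h4 : b = d + 1
        · subst h1; subst h4
          have e := rel a d (by omega) (by omega)
          simp [h2, h3]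
          linarith [e.2.1]
        · simp [h3, h4]
    · by_cases h2 : a = c + 1
      · by_cases h3 : d = b + 1
        · have h4 : ¬ b = d + 1 := by omega
          subst h2; subst h3
          have e := rel c b (by omega) (by omega)
          simp [h1, h4]
          linarith [e.2.2.2]
        · by_cases h4 : b = d + 1
          · subst h2; subst h4
            have e := rel c d (by omega) (by omega)
            simp [h1, h3]
            linarith [e.2.2.1]
          · simp [h3, h4]
      · simp [h1, h2]
end

section
/- Let P(u,v) > 0 for all nearest-neighbor pairs u ∼ v in the grid E, and suppose the associated directional transition matrices P_1,...,P_m commute pairwise (equivalently, the quadratic commutation relations P(u,u+e_i)P(u+e_i,u+e_i±e_j) = P(u,u±e_j)P(u±e_j,u+e_i±e_j) hold, in all four sign combinations). Then P is reversible: there exist positive constants b_u, u ∈ E, unique up to a common positive multiple, such that b_u P(u,v) = b_v P(v,u) for all u ∼ v. -/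
/-- Vertices of the grid `{0,…,n₁} × ⋯ × {0,…,n_m}`. -/
abbrev GridV (m : ℕ) (n : Fin m → ℕ) := ∀ k : Fin m, Fin (n k + 1)

/-- `u` and `v` are nearest neighbors in direction `k`, i.e. `u - v ∈ {±e_k}`. -/
abbrev gridAdjDir {m : ℕ} {n : Fin m → ℕ} (k : Fin m) (u v : GridV m n) : Prop :=
  (∀ l, l ≠ k → u l = v l) ∧ ((u k : ℕ) + 1 = (v k : ℕ) ∨ (v k : ℕ) + 1 = (u k : ℕ))

/-- Nearest-neighbor relation `u ∼ v` on the grid. -/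
abbrev gridAdj {m : ℕ} {n : Fin m → ℕ} (u v : GridV m n) : Prop :=
  ∃ k, gridAdjDir k u v

/-- The directional transition matrix `P_k`. -/
def dirMatrix {m : ℕ} (n : Fin m → ℕ) (P : GridV m n → GridV m n → ℝ) (k : Fin m) :
    Matrix (GridV m n) (GridV m n) ℝ :=
  fun u v => if gridAdjDir k u v then P u v else 0

namespace RevAux

variable {m : ℕ} {n : Fin m → ℕ}

/-- Step up in direction `k` (truncated at the boundary). -/
def up (u : GridV m n) (k : Fin m) : GridV m n :=
  Function.update u k ⟨min ((u k : ℕ) + 1) (n k), by omega⟩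

lemma up_val (u : GridV m n) (k l : Fin m) :
    ((up u k) l : ℕ) = if l = k then min ((u k : ℕ) + 1) (n k) else (u l : ℕ) := by
  rcases eq_or_ne l k with rfl | h
  · simp [up]
  · simp [up, Function.update_of_ne h, h]

lemma up_apply_self' (u : GridV m n) (k : Fin m) (h : (u k : ℕ) < n k) :
    ((up u k) k : ℕ) = (u k : ℕ) + 1 := by
  simp [up_val]; omega

lemma up_apply_ne (u : GridV m n) (k : Fin m) {l : Fin m} (hl : l ≠ k) :
    up u k l = u l := by
  simp [up, Function.update_of_ne hl]

lemma adj_up (u : GridV m n) (k : Fin m) (h : (u k : ℕ) < n k) :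
    gridAdjDir k u (up u k) := by
  refine ⟨fun l hl => (up_apply_ne u k hl).symm, Or.inl ?_⟩
  rw [up_apply_self' u k h]

lemma adj_symm {k : Fin m} {u v : GridV m n} (h : gridAdjDir k u v) : gridAdjDir k v u :=
  ⟨fun l hl => (h.1 l hl).symm, h.2.symm⟩

lemma up_comm (u : GridV m n) {k l : Fin m} (hkl : k ≠ l) :
    up (up u k) l = up (up u l) k := by
  funext j
  apply Fin.ext
  simp only [up_val]
  split_ifs <;> simp_all

section

variable (P : GridV m n → GridV m n → ℝ)

/-- Detailed-balance ratio. -/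
noncomputable def Q (u v : GridV m n) : ℝ := P u v / P v u

/-- The canonical "staircase" point: coordinates below `k` from `u`, coordinate `k` equal
to `i` (truncated), later coordinates `0`. -/
def pre (u : GridV m n) (k : Fin m) (i : ℕ) : GridV m n :=
  fun l => ⟨if (l : ℕ) < (k : ℕ) then (u l : ℕ) else if (l : ℕ) = (k : ℕ) then min i (n l) else 0,
    by split_ifs <;> omega⟩

lemma pre_val (u : GridV m n) (k : Fin m) (i : ℕ) (l : Fin m) :
    ((pre u k i) l : ℕ) =
      if (l : ℕ) < (k : ℕ) then (u l : ℕ) else if (l : ℕ) = (k : ℕ) then min i (n l) else 0 :=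
  rfl

lemma pre_congr {u v : GridV m n} (k : Fin m) (i : ℕ)
    (h : ∀ l : Fin m, (l : ℕ) < (k : ℕ) → u l = v l) : pre u k i = pre v k i := by
  funext l
  apply Fin.ext
  simp only [pre_val]
  split_ifs with h1 h2
  · rw [h l h1]
  · rfl
  · rfl

lemma pre_adj (u : GridV m n) (k : Fin m) (i : ℕ) (hi : i < n k) :
    gridAdjDir k (pre u k i) (pre u k (i + 1)) := by
  constructor
  · intro l hl
    apply Fin.ext
    simp only [pre_val]
    have : (l : ℕ) ≠ (k : ℕ) := fun h => hl (Fin.ext h)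
    split_ifs <;> omega
  · left
    have h1 : ((pre u k i) k : ℕ) = min i (n k) := by simp [pre_val]
    have h2 : ((pre u k (i + 1)) k : ℕ) = min (i + 1) (n k) := by simp [pre_val]
    omega

/-- The candidate reversible measure. -/
noncomputable def bfun (u : GridV m n) : ℝ :=
  ∏ k : Fin m, ∏ i ∈ Finset.range ((u k : ℕ)), Q P (pre u k i) (pre u k (i + 1))

lemma mul_entry (k l : Fin m) (x w v0 : GridV m n)
    (h1 : gridAdjDir k x v0) (h2 : gridAdjDir l v0 w)
    (huniq : ∀ v, gridAdjDir k x v → gridAdjDir l v w → v = v0) :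
    (dirMatrix n P k * dirMatrix n P l) x w = P x v0 * P v0 w := by
  rw [Matrix.mul_apply, Finset.sum_eq_single v0]
  · simp only [dirMatrix]
    rw [if_pos h1, if_pos h2]
  · intro v _ hv
    by_cases ha : gridAdjDir k x v
    · by_cases hb : gridAdjDir l v w
      · exact absurd (huniq v ha hb) hv
      · simp [dirMatrix, hb]
    · simp [dirMatrix, ha]
  · intro h; exact absurd (Finset.mem_univ v0) h

lemma plaq (hpos : ∀ u v : GridV m n, gridAdj u v → 0 < P u v)
    (hcomm : ∀ i j : Fin m,
      dirMatrix n P i * dirMatrix n P j = dirMatrix n P j * dirMatrix n P i)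
    (x : GridV m n) (k l : Fin m) (hkl : k ≠ l)
    (hk : (x k : ℕ) < n k) (hl : (x l : ℕ) < n l) :
    Q P x (up x k) * Q P (up x k) (up (up x k) l) =
      Q P x (up x l) * Q P (up x l) (up (up x k) l) := by
  set w := up (up x k) l with hw
  have hxkl : ((up x k) l : ℕ) < n l := by rw [up_apply_ne x k hkl.symm]; exact hl
  have hxlk : ((up x l) k : ℕ) < n k := by rw [up_apply_ne x l hkl]; exact hk
  have a1 : gridAdjDir k x (up x k) := adj_up x k hk
  have a2 : gridAdjDir l (up x k) w := adj_up (up x k) l hxkl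
  have a3 : gridAdjDir l x (up x l) := adj_up x l hl
  have hwc : up (up x l) k = w := (up_comm x hkl).symm
  have a4 : gridAdjDir k (up x l) w := hwc ▸ adj_up (up x l) k hxlk
  -- value facts
  have wval : ∀ j : Fin m, (w j : ℕ) =
      if j = k then (x k : ℕ) + 1 else if j = l then (x l : ℕ) + 1 else (x j : ℕ) := by
    intro j
    rcases eq_or_ne j k with rfl | hjk
    · rw [if_pos rfl, hw, up_apply_ne _ _ hkl, up_apply_self' x j hk]
    · rcases eq_or_ne j l with rfl | hjl
      · rw [if_neg hjk, if_pos rfl, hw]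
        have : ((up x k) j : ℕ) = x j := congrArg Fin.val (up_apply_ne x k hjk)
        rw [up_apply_self' (up x k) j (by rw [this]; exact hl), this]
      · rw [if_neg hjk, if_neg hjl, hw, up_apply_ne _ _ hjl, up_apply_ne _ _ hjk]
  -- uniqueness facts
  have uniq1 : ∀ v, gridAdjDir k x v → gridAdjDir l v w → v = up x k := by
    intro v hv1 hv2
    funext j
    rcases eq_or_ne j k with rfl | hjk
    · rw [hv2.1 j hkl, hw, up_apply_ne _ _ hkl]
    · rw [← hv1.1 j hjk, up_apply_ne _ _ hjk]
  have uniq2 : ∀ v, gridAdjDir l x v → gridAdjDir k v w → v = up x l := by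
    intro v hv1 hv2
    funext j
    rcases eq_or_ne j l with rfl | hjl
    · apply Fin.ext
      rw [congrArg Fin.val (hv2.1 j hkl.symm), wval]
      rw [if_neg hkl.symm, if_pos rfl, up_apply_self' x j hl]
    · rw [← hv1.1 j hjl, up_apply_ne _ _ hjl]
  have uniq3 : ∀ v, gridAdjDir k w v → gridAdjDir l v x → v = up x l := by
    intro v hv1 hv2
    funext j
    rcases eq_or_ne j l with rfl | hjl
    · apply Fin.ext
      rw [← congrArg Fin.val (hv1.1 j hkl.symm), wval,
        if_neg hkl.symm, if_pos rfl, up_apply_self' x j hl]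
    · rcases eq_or_ne j k with rfl | hjk
      · rw [hv2.1 j hkl, up_apply_ne _ _ hkl]
      · rw [hv2.1 j hjl, up_apply_ne _ _ hjl]
  have uniq4 : ∀ v, gridAdjDir l w v → gridAdjDir k v x → v = up x k := by
    intro v hv1 hv2
    funext j
    rcases eq_or_ne j k with rfl | hjk
    · apply Fin.ext
      rw [← congrArg Fin.val (hv1.1 j hkl), wval, if_pos rfl, up_apply_self' x j hk]
    · rw [hv2.1 j hjk, up_apply_ne _ _ hjk]
  -- entry identities
  have id1 : P x (up x k) * P (up x k) w = P x (up x l) * P (up x l) w := by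
    have e1 := mul_entry P k l x w (up x k) a1 a2 uniq1
    have e2 := mul_entry P l k x w (up x l) a3 a4 uniq2
    rw [← e1, ← e2, hcomm k l]
  have id2 : P w (up x k) * P (up x k) x = P w (up x l) * P (up x l) x := by
    have e1 := mul_entry P k l w x (up x l) (adj_symm a4) (adj_symm a3) uniq3
    have e2 := mul_entry P l k w x (up x k) (adj_symm a2) (adj_symm a1) uniq4
    rw [← e1, ← e2, hcomm k l]
  -- conclude
  have p1 : 0 < P (up x k) x := hpos _ _ ⟨k, adj_symm a1⟩
  have p2 : 0 < P w (up x k) := hpos _ _ ⟨l, adj_symm a2⟩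
  have p3 : 0 < P (up x l) x := hpos _ _ ⟨l, adj_symm a3⟩
  have p4 : 0 < P w (up x l) := hpos _ _ ⟨k, adj_symm a4⟩
  rw [Q, Q, Q, Q, div_mul_div_comm, div_mul_div_comm,
    div_eq_div_iff (by positivity) (by positivity)]
  linear_combination (P (up x l) x * P w (up x l)) * id1 -
    (P x (up x l) * P (up x l) w) * id2

lemma bfun_pos (hpos : ∀ u v : GridV m n, gridAdj u v → 0 < P u v) (u : GridV m n) :
    0 < bfun P u := by
  apply Finset.prod_pos
  intro k _
  apply Finset.prod_pos
  intro i hi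
  have hadj : gridAdjDir k (pre u k i) (pre u k (i + 1)) :=
    pre_adj u k i (lt_of_lt_of_le (Finset.mem_range.mp hi) (by omega))
  exact div_pos (hpos _ _ ⟨k, hadj⟩) (hpos _ _ ⟨k, adj_symm hadj⟩)

lemma balance_up (hpos : ∀ u v : GridV m n, gridAdj u v → 0 < P u v)
    (hcomm : ∀ i j : Fin m,
      dirMatrix n P i * dirMatrix n P j = dirMatrix n P j * dirMatrix n P i) :
    ∀ N : ℕ, ∀ u : GridV m n, ∀ k : Fin m,
      (∑ l ∈ Finset.univ.filter (fun l : Fin m => (k : ℕ) < (l : ℕ)), (u l : ℕ)) = N →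
      (u k : ℕ) < n k →
      bfun P (up u k) = bfun P u * Q P u (up u k) := by
  intro N
  induction N using Nat.strong_induction_on with
  | _ N IH =>
  intro u k hsum hk
  by_cases hz : ∀ l : Fin m, (k : ℕ) < (l : ℕ) → (u l : ℕ) = 0
  · -- base case: all later coordinates are zero
    have key : ∀ l : Fin m,
        (∏ i ∈ Finset.range (((up u k) l : ℕ)),
            Q P (pre (up u k) l i) (pre (up u k) l (i + 1))) =
        (∏ i ∈ Finset.range ((u l : ℕ)), Q P (pre u l i) (pre u l (i + 1))) *
          (if l = k then Q P u (up u k) else 1) := by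
      intro l
      have hcoord : ∀ j : Fin m, (j : ℕ) < (l : ℕ) → (l : ℕ) ≤ (k : ℕ) → up u k j = u j := by
        intro j hj hlk
        exact up_apply_ne u k (fun h => by rw [h] at hj; omega)
      rcases lt_trichotomy (l : ℕ) (k : ℕ) with h | h | h
      · have hne : l ≠ k := fun hh => by rw [hh] at h; omega
        rw [if_neg hne, mul_one]
        have h1 : ((up u k) l : ℕ) = (u l : ℕ) :=
          congrArg Fin.val (up_apply_ne u k hne)
        rw [h1]
        refine Finset.prod_congr rfl fun i _ => ?_
        rw [pre_congr (u := up u k) (v := u) l i (fun j hj => hcoord j hj h.le),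
          pre_congr (u := up u k) (v := u) l (i + 1) (fun j hj => hcoord j hj h.le)]
      · have hlk : l = k := Fin.ext h
        subst hlk
        rw [if_pos rfl]
        have h1 : ((up u l) l : ℕ) = (u l : ℕ) + 1 := up_apply_self' u l hk
        have hc : ∀ i : ℕ, pre (up u l) l i = pre u l i := fun i =>
          pre_congr (u := up u l) (v := u) l i (fun j hj => hcoord j hj le_rfl)
        rw [h1, Finset.prod_range_succ]
        congr 1
        · exact Finset.prod_congr rfl fun i _ => by rw [hc i, hc (i + 1)]
        · rw [hc _, hc _]
          have e1 : pre u l ((u l : ℕ)) = u := by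
            funext j
            apply Fin.ext
            rw [pre_val]
            rcases lt_trichotomy (j : ℕ) (l : ℕ) with h' | h' | h'
            · rw [if_pos h']
            · rw [if_neg (by omega), if_pos h']
              have : j = l := Fin.ext h'
              subst this
              omega
            · rw [if_neg (by omega), if_neg (by omega)]
              exact (hz j h').symm
          have e2 : pre u l ((u l : ℕ) + 1) = up u l := by
            funext j
            apply Fin.ext
            rw [pre_val, up_val]
            rcases eq_or_ne j l with rfl | hj
            · rw [if_pos rfl, if_neg (by omega), if_pos rfl]
            · have hjv : (j : ℕ) ≠ (l : ℕ) := fun hh => hj (Fin.ext hh)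
              rw [if_neg hj]
              rcases lt_or_gt_of_ne hjv with h' | h'
              · rw [if_pos h']
              · rw [if_neg (by omega), if_neg hjv]
                exact (hz j (by omega)).symm
          rw [e1, e2]
      · have hne : l ≠ k := fun hh => by rw [hh] at h; omega
        rw [if_neg hne, mul_one]
        have h0 : (u l : ℕ) = 0 := hz l h
        have h1 : ((up u k) l : ℕ) = 0 := by
          rw [congrArg Fin.val (up_apply_ne u k hne)]; exact h0
        rw [h0, h1]
        simp
    rw [bfun, bfun, Finset.prod_congr rfl (fun l _ => key l), Finset.prod_mul_distrib]
    congr 1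
    simp
  · -- inductive step
    push_neg at hz
    obtain ⟨l, hkl, hul⟩ := hz
    have hkl' : k ≠ l := fun hh => by rw [hh] at hkl; omega
    have hull : (u l : ℕ) ≤ n l := by omega
    set u' : GridV m n := Function.update u l ⟨(u l : ℕ) - 1, by omega⟩ with hu'
    have hu'val : ∀ j : Fin m, (u' j : ℕ) = if j = l then (u l : ℕ) - 1 else (u j : ℕ) := by
      intro j
      rcases eq_or_ne j l with rfl | hj
      · simp [hu']
      · rw [if_neg hj]
        simp [hu', Function.update_of_ne hj]
    have hupl : up u' l = u := by
      funext j
      apply Fin.ext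
      rw [up_val]
      rcases eq_or_ne j l with rfl | hj
      · rw [if_pos rfl, hu'val, if_pos rfl]
        omega
      · rw [if_neg hj, hu'val, if_neg hj]
    have hu'k : (u' k : ℕ) < n k := by rw [hu'val, if_neg hkl']; exact hk
    have hu'l : (u' l : ℕ) < n l := by rw [hu'val, if_pos rfl]; omega
    have hlmem : l ∈ Finset.univ.filter (fun j : Fin m => (k : ℕ) < (j : ℕ)) := by
      simp only [Finset.mem_filter, Finset.mem_univ, true_and]
      exact hkl
    -- sum facts
    have hdecomp : (u l : ℕ) +
        (∑ j ∈ (Finset.univ.filter (fun j : Fin m => (k : ℕ) < (j : ℕ))).erase l, (u j : ℕ)) =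
        ∑ j ∈ Finset.univ.filter (fun j : Fin m => (k : ℕ) < (j : ℕ)), (u j : ℕ) :=
      Finset.add_sum_erase _ (fun j : Fin m => (u j : ℕ)) hlmem
    have hsub : Finset.univ.filter (fun j : Fin m => (l : ℕ) < (j : ℕ)) ⊆
        (Finset.univ.filter (fun j : Fin m => (k : ℕ) < (j : ℕ))).erase l := by
      intro j hj
      simp only [Finset.mem_filter, Finset.mem_univ, true_and] at hj
      simp only [Finset.mem_erase, Finset.mem_filter, Finset.mem_univ, true_and]
      exact ⟨fun hh => by rw [hh] at hj; omega, by omega⟩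
    have hT1 : (∑ j ∈ Finset.univ.filter (fun j : Fin m => (l : ℕ) < (j : ℕ)), (u j : ℕ)) < N := by
      have hle : (∑ j ∈ Finset.univ.filter (fun j : Fin m => (l : ℕ) < (j : ℕ)), (u j : ℕ)) ≤
          ∑ j ∈ (Finset.univ.filter (fun j : Fin m => (k : ℕ) < (j : ℕ))).erase l, (u j : ℕ) :=
        Finset.sum_le_sum_of_subset hsub
      omega
    have hsame : ∀ j : Fin m, (l : ℕ) < (j : ℕ) → (u' j : ℕ) = (u j : ℕ) := by
      intro j hj
      rw [hu'val, if_neg (fun hh => by rw [hh] at hj; omega)]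
    have hsum1 : (∑ j ∈ Finset.univ.filter (fun j : Fin m => (l : ℕ) < (j : ℕ)), (u' j : ℕ)) =
        ∑ j ∈ Finset.univ.filter (fun j : Fin m => (l : ℕ) < (j : ℕ)), (u j : ℕ) := by
      refine Finset.sum_congr rfl fun j hj => ?_
      simp only [Finset.mem_filter, Finset.mem_univ, true_and] at hj
      exact hsame j hj
    have hNpos : 0 < N := by omega
    have hsum2 : (∑ j ∈ Finset.univ.filter (fun j : Fin m => (k : ℕ) < (j : ℕ)), (u' j : ℕ)) =
        N - 1 := by
      have hdecomp' : (u' l : ℕ) +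
          (∑ j ∈ (Finset.univ.filter (fun j : Fin m => (k : ℕ) < (j : ℕ))).erase l, (u' j : ℕ)) =
          ∑ j ∈ Finset.univ.filter (fun j : Fin m => (k : ℕ) < (j : ℕ)), (u' j : ℕ) :=
        Finset.add_sum_erase _ (fun j : Fin m => (u' j : ℕ)) hlmem
      have herase : (∑ j ∈ (Finset.univ.filter
            (fun j : Fin m => (k : ℕ) < (j : ℕ))).erase l, (u' j : ℕ)) =
          ∑ j ∈ (Finset.univ.filter (fun j : Fin m => (k : ℕ) < (j : ℕ))).erase l, (u j : ℕ) := by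
        refine Finset.sum_congr rfl fun j hj => ?_
        rw [hu'val, if_neg (Finset.ne_of_mem_erase hj)]
      have hl' : (u' l : ℕ) = (u l : ℕ) - 1 := by rw [hu'val, if_pos rfl]
      omega
    -- three IH applications
    have E1 : bfun P u = bfun P u' * Q P u' u := by
      have := IH _ hT1 u' l hsum1 hu'l
      rwa [hupl] at this
    have E2 : bfun P (up u' k) = bfun P u' * Q P u' (up u' k) :=
      IH _ (by omega : N - 1 < N) u' k hsum2 hu'k
    have hupkl : ((up u' k) l : ℕ) = (u' l : ℕ) := congrArg Fin.val (up_apply_ne u' k hkl'.symm)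
    have hsum3 : (∑ j ∈ Finset.univ.filter (fun j : Fin m => (l : ℕ) < (j : ℕ)),
        ((up u' k) j : ℕ)) =
        ∑ j ∈ Finset.univ.filter (fun j : Fin m => (l : ℕ) < (j : ℕ)), (u j : ℕ) := by
      refine Finset.sum_congr rfl fun j hj => ?_
      simp only [Finset.mem_filter, Finset.mem_univ, true_and] at hj
      rw [congrArg Fin.val (up_apply_ne u' k (fun hh => by rw [hh] at hj; omega)), hsame j hj]
    have hW : up (up u' k) l = up u k := by
      rw [up_comm u' hkl', hupl]
    have E3 : bfun P (up u k) = bfun P (up u' k) * Q P (up u' k) (up u k) := by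
      have := IH _ hT1 (up u' k) l hsum3 (by rw [hupkl]; exact hu'l)
      rwa [hW] at this
    have E4 := plaq P hpos hcomm u' k l hkl' hu'k hu'l
    rw [hW, hupl] at E4
    rw [E3, E2, E1]
    linear_combination bfun P u' * E4

lemma bfun_balance (hpos : ∀ u v : GridV m n, gridAdj u v → 0 < P u v)
    (hcomm : ∀ i j : Fin m,
      dirMatrix n P i * dirMatrix n P j = dirMatrix n P j * dirMatrix n P i) :
    ∀ u v : GridV m n, gridAdj u v → bfun P u * P u v = bfun P v * P v u := by
  rintro u v ⟨k, hadj⟩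
  rcases hadj.2 with hc | hc
  · have hk : (u k : ℕ) < n k := by have := (v k).isLt; omega
    have hv : v = up u k := by
      funext j
      rcases eq_or_ne j k with rfl | hj
      · apply Fin.ext
        rw [up_apply_self' u j hk]
        omega
      · exact ((hadj.1 j hj).symm).trans (up_apply_ne u k hj).symm
    subst hv
    have hb := balance_up P hpos hcomm _ u k rfl hk
    rw [hb, Q]
    have hne : P (up u k) u ≠ 0 := (hpos _ _ ⟨k, adj_symm (adj_up u k hk)⟩).ne'
    field_simp
  · have hk : (v k : ℕ) < n k := by have := (u k).isLt; omega
    have hu : u = up v k := by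
      funext j
      rcases eq_or_ne j k with rfl | hj
      · apply Fin.ext
        rw [up_apply_self' v j hk]
        omega
      · exact (hadj.1 j hj).trans (up_apply_ne v k hj).symm
    subst hu
    have hb := balance_up P hpos hcomm _ v k rfl hk
    rw [hb, Q]
    have hne : P (up v k) v ≠ 0 := (hpos _ _ ⟨k, adj_symm (adj_up v k hk)⟩).ne'
    field_simp

end

end RevAux

/-- If all nearest-neighbor transition probabilities are positive and the
directional matrices `P_1,…,P_m` commute pairwise, then `P` is reversible: there are positive
constants `b_u`, unique up to a common positive multiple, with `b_u P(u,v) = b_v P(v,u)`. -/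
theorem reversible_of_commuting {m : ℕ} (n : Fin m → ℕ)
    (P : GridV m n → GridV m n → ℝ)
    (hpos : ∀ u v, gridAdj u v → 0 < P u v)
    (hcomm : ∀ i j : Fin m,
      dirMatrix n P i * dirMatrix n P j = dirMatrix n P j * dirMatrix n P i) :
    ∃ b : GridV m n → ℝ, (∀ u, 0 < b u) ∧
      (∀ u v, gridAdj u v → b u * P u v = b v * P v u) ∧
      ∀ b' : GridV m n → ℝ, (∀ u, 0 < b' u) →
        (∀ u v, gridAdj u v → b' u * P u v = b' v * P v u) →
        ∃ c : ℝ, 0 < c ∧ ∀ u, b' u = c * b u := by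
  classical
  refine ⟨RevAux.bfun P, fun u => RevAux.bfun_pos P hpos u,
    RevAux.bfun_balance P hpos hcomm, ?_⟩
  intro b' hb'pos hb'
  set z : GridV m n := fun k => ⟨0, Nat.succ_pos _⟩ with hzdef
  refine ⟨b' z / RevAux.bfun P z, div_pos (hb'pos z) (RevAux.bfun_pos P hpos z), ?_⟩
  have main : ∀ N : ℕ, ∀ u : GridV m n, (∑ j, (u j : ℕ)) = N →
      b' u = (b' z / RevAux.bfun P z) * RevAux.bfun P u := by
    intro N
    induction N using Nat.strong_induction_on with
    | _ N IH =>
    intro u hsum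
    by_cases h0 : ∀ j, (u j : ℕ) = 0
    · have hu : u = z := funext fun j => Fin.ext (h0 j)
      rw [hu, div_mul_cancel₀ _ (RevAux.bfun_pos P hpos z).ne']
    · push_neg at h0
      obtain ⟨l, hl⟩ := h0
      set u' : GridV m n := Function.update u l ⟨(u l : ℕ) - 1, by omega⟩ with hu'def
      have hu'val : ∀ j, (u' j : ℕ) = if j = l then (u l : ℕ) - 1 else (u j : ℕ) := by
        intro j
        rcases eq_or_ne j l with rfl | hj
        · simp [hu'def]
        · rw [if_neg hj]
          simp [hu'def, Function.update_of_ne hj]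
      have hadj : gridAdjDir l u' u :=
        ⟨fun j hj => by apply Fin.ext; rw [hu'val, if_neg hj],
          Or.inl (by rw [hu'val, if_pos rfl]; omega)⟩
      have d1 : (u l : ℕ) + ∑ j ∈ Finset.univ.erase l, (u j : ℕ) = ∑ j, (u j : ℕ) :=
        Finset.add_sum_erase _ (fun j => (u j : ℕ)) (Finset.mem_univ l)
      have d2 : (u' l : ℕ) + ∑ j ∈ Finset.univ.erase l, (u' j : ℕ) = ∑ j, (u' j : ℕ) :=
        Finset.add_sum_erase _ (fun j => (u' j : ℕ)) (Finset.mem_univ l)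
      have d3 : (∑ j ∈ Finset.univ.erase l, (u' j : ℕ)) =
          ∑ j ∈ Finset.univ.erase l, (u j : ℕ) := by
        refine Finset.sum_congr rfl fun j hj => ?_
        rw [hu'val, if_neg (Finset.ne_of_mem_erase hj)]
      have hl0 : (u' l : ℕ) = (u l : ℕ) - 1 := by rw [hu'val, if_pos rfl]
      have hsum' : (∑ j, (u' j : ℕ)) = N - 1 := by omega
      have hNpos : 0 < N := by omega
      have IH' := IH (N - 1) (by omega) u' hsum'
      have hA := hb' u' u ⟨l, hadj⟩
      have hB := RevAux.bfun_balance P hpos hcomm u' u ⟨l, hadj⟩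
      have hPne : P u u' ≠ 0 := (hpos u u' ⟨l, RevAux.adj_symm hadj⟩).ne'
      apply mul_right_cancel₀ hPne
      linear_combination (-1) * hA + P u' u * IH' + (b' z / RevAux.bfun P z) * hB
  intro u
  exact main _ u rfl
end

section
/- Let P(u,v) > 0 for all nearest-neighbor pairs u ∼ v in the grid E. Then the matrices P_1,...,P_m commute pairwise if and only if there exist positive constants a_u (u ∈ E) and W(u,v) (for u ∼ v) such that P(u,v) = a_u W(u,v) a_v^{-1}, where W(u',v') = W(u'',v'') whenever v' − u' ∈ {±e_k} for some k and (u'',v'') = (u'+w, v'+w) for some w in the sublattice spanned by {e_ℓ : ℓ ≠ k}, and W(u,v) = W(v,u). -/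
namespace CommuteParam

variable {m : ℕ} {n : Fin m → ℕ}

lemma adjDir_symm {k : Fin m} {u v : GridV m n} (h : gridAdjDir k u v) : gridAdjDir k v u :=
  ⟨fun l hl => (h.1 l hl).symm, h.2.symm⟩

lemma adj_symm {u v : GridV m n} (h : gridAdj u v) : gridAdj v u :=
  ⟨h.choose, adjDir_symm h.choose_spec⟩

/-- midpoint of an (i then j) path from `u` to `w` -/
def midPt (i : Fin m) (u w : GridV m n) : GridV m n := Function.update u i (w i)

lemma eq_midPt {i j : Fin m} (hij : i ≠ j) {u v w : GridV m n}
    (h1 : gridAdjDir i u v) (h2 : gridAdjDir j v w) : v = midPt i u w := by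
  funext l
  by_cases hl : l = i
  · subst hl
    rw [midPt, Function.update_self]
    exact h2.1 l hij
  · rw [midPt, Function.update_of_ne hl]
    exact (h1.1 l hl).symm

lemma midPt_apply_ne {i l : Fin m} (h : l ≠ i) (u w : GridV m n) : midPt i u w l = u l :=
  Function.update_of_ne h _ _

lemma midPt_apply_self (i : Fin m) (u w : GridV m n) : midPt i u w i = w i :=
  Function.update_self _ _ _

variable (P : GridV m n → GridV m n → ℝ)

lemma dirMatrix_pos {k : Fin m} {u v : GridV m n} (h : gridAdjDir k u v) :
    dirMatrix n P k u v = P u v := if_pos h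

lemma dirMatrix_neg {k : Fin m} {u v : GridV m n} (h : ¬ gridAdjDir k u v) :
    dirMatrix n P k u v = 0 := if_neg h

lemma dir_mul_apply {i j : Fin m} (hij : i ≠ j) (u w : GridV m n) :
    (dirMatrix n P i * dirMatrix n P j) u w
      = dirMatrix n P i u (midPt i u w) * dirMatrix n P j (midPt i u w) w := by
  rw [Matrix.mul_apply]
  apply Finset.sum_eq_single
  · intro v _ hv
    by_cases h1 : gridAdjDir i u v
    · by_cases h2 : gridAdjDir j v w
      · exact absurd (eq_midPt hij h1 h2) hv
      · rw [dirMatrix_neg P h2, mul_zero]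
    · rw [dirMatrix_neg P h1, zero_mul]
  · intro h; exact absurd (Finset.mem_univ _) h

lemma corner
    (hc : ∀ i j : Fin m, dirMatrix n P i * dirMatrix n P j = dirMatrix n P j * dirMatrix n P i)
    {i j : Fin m} (hij : i ≠ j) {u v1 v2 w : GridV m n}
    (h1 : gridAdjDir i u v1) (h2 : gridAdjDir j v1 w)
    (h3 : gridAdjDir j u v2) (h4 : gridAdjDir i v2 w) :
    P u v1 * P v1 w = P u v2 * P v2 w := by
  have H : (dirMatrix n P i * dirMatrix n P j) u w
      = (dirMatrix n P j * dirMatrix n P i) u w := by rw [hc i j]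
  rw [dir_mul_apply P hij u w, dir_mul_apply P hij.symm u w,
    ← eq_midPt hij h1 h2, ← eq_midPt hij.symm h3 h4,
    dirMatrix_pos P h1, dirMatrix_pos P h2, dirMatrix_pos P h3, dirMatrix_pos P h4] at H
  exact H


variable (hpos : ∀ u v : GridV m n, gridAdj u v → 0 < P u v)
variable (hc : ∀ i j : Fin m, dirMatrix n P i * dirMatrix n P j = dirMatrix n P j * dirMatrix n P i)

include hpos hc in
lemma square_g {k j : Fin m} (hjk : j ≠ k) {u v u₂ v₂ : GridV m n}
    (huv : gridAdjDir k u v) (hu : gridAdjDir j u u₂) (hv : gridAdjDir j v v₂)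
    (h₂ : gridAdjDir k u₂ v₂) :
    P u v * P v u = P u₂ v₂ * P v₂ u₂ := by
  have e1 : P u v * P v v₂ = P u u₂ * P u₂ v₂ := corner P hc hjk.symm huv hv hu h₂
  have e2 : P v₂ v * P v u = P v₂ u₂ * P u₂ u :=
    corner P hc hjk (adjDir_symm hv) (adjDir_symm huv) (adjDir_symm h₂) (adjDir_symm hu)
  have e3 : P v u * P u u₂ = P v v₂ * P v₂ u₂ :=
    corner P hc hjk.symm (adjDir_symm huv) hu hv (adjDir_symm h₂)
  have e4 : P u₂ u * P u v = P u₂ v₂ * P v₂ v :=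
    corner P hc hjk (adjDir_symm hu) huv h₂ (adjDir_symm hv)
  have hp : 0 < P u v := hpos _ _ ⟨k, huv⟩
  have hp' : 0 < P v u := hpos _ _ ⟨k, adjDir_symm huv⟩
  have hq : 0 < P u₂ v₂ := hpos _ _ ⟨k, h₂⟩
  have hq' : 0 < P v₂ u₂ := hpos _ _ ⟨k, adjDir_symm h₂⟩
  have hr : 0 < P u u₂ := hpos _ _ ⟨j, hu⟩
  have hr' : 0 < P u₂ u := hpos _ _ ⟨j, adjDir_symm hu⟩
  have hs : 0 < P v v₂ := hpos _ _ ⟨j, hv⟩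
  have hs' : 0 < P v₂ v := hpos _ _ ⟨j, adjDir_symm hv⟩
  have key : (P u v * P v u) ^ 2 * (P u u₂ * P u₂ u * (P v v₂ * P v₂ v))
      = (P u₂ v₂ * P v₂ u₂) ^ 2 * (P u u₂ * P u₂ u * (P v v₂ * P v₂ v)) := by
    linear_combination
      (P u₂ u * P u v * (P v₂ v * P v u) * (P v u * P u u₂)) * e1
      + ((P u u₂ * P u₂ v₂) * (P v₂ v * P v u) * (P v u * P u u₂)) * e4
      + ((P u u₂ * P u₂ v₂) * (P u₂ v₂ * P v₂ v) * (P v u * P u u₂)) * e2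
      + ((P u u₂ * P u₂ v₂) * (P u₂ v₂ * P v₂ v) * (P v₂ u₂ * P u₂ u)) * e3
  have key2 : (P u v * P v u) ^ 2 = (P u₂ v₂ * P v₂ u₂) ^ 2 :=
    mul_right_cancel₀ (by positivity) key
  have key3 : (P u v * P v u - P u₂ v₂ * P v₂ u₂) * (P u v * P v u + P u₂ v₂ * P v₂ u₂) = 0 := by
    linear_combination key2
  rcases mul_eq_zero.1 key3 with h | h
  · linarith
  · nlinarith

include hpos hc in
lemma g_const {k : Fin m} {u v u' v' : GridV m n}
    (h : gridAdjDir k u v) (h' : gridAdjDir k u' v')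
    (hk : u' k = u k) (hk' : v' k = v k) :
    P u v * P v u = P u' v' * P v' u' := by
  suffices H : ∀ d : ℕ, ∀ u v u' v' : GridV m n, gridAdjDir k u v → gridAdjDir k u' v' →
      u' k = u k → v' k = v k → (∑ l, Nat.dist (u l : ℕ) (u' l : ℕ)) = d →
      P u v * P v u = P u' v' * P v' u' from H _ u v u' v' h h' hk hk' rfl
  intro d
  induction d using Nat.strong_induction_on with
  | _ d ih =>
  intro u v u' v' h h' hk hk' hd
  by_cases he : u = u'
  · subst he
    have hv : v = v' := by
      funext l
      by_cases hl : l = k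
      · subst hl; exact hk'.symm
      · exact (h.1 l hl).symm.trans (h'.1 l hl)
    rw [hv]
  · have : ∃ j, u j ≠ u' j := by
      by_contra h0
      push_neg at h0
      exact he (funext h0)
    obtain ⟨j, hj⟩ := this
    have hjk : j ≠ k := fun hh => hj (by rw [hh]; exact hk.symm)
    have hjv : (u j : ℕ) ≠ (u' j : ℕ) := fun hh => hj (Fin.ext hh)
    have hult := (u j).isLt
    have hult' := (u' j).isLt
    obtain ⟨t, htlt, hadj, hdist⟩ :
        ∃ t : ℕ, t < n j + 1 ∧ ((u j : ℕ) + 1 = t ∨ t + 1 = (u j : ℕ)) ∧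
          Nat.dist t (u' j : ℕ) + 1 = Nat.dist (u j : ℕ) (u' j : ℕ) := by
      rcases Nat.lt_or_ge (u j : ℕ) (u' j : ℕ) with hcase | hcase
      · exact ⟨(u j : ℕ) + 1, by omega, Or.inl rfl, by simp [Nat.dist]; omega⟩
      · exact ⟨(u j : ℕ) - 1, by omega, Or.inr (by omega), by simp [Nat.dist]; omega⟩
    set u₂ := Function.update u j (⟨t, htlt⟩ : Fin (n j + 1)) with hu₂
    set v₂ := Function.update v j (⟨t, htlt⟩ : Fin (n j + 1)) with hv₂
    have hu₂j : (u₂ j : ℕ) = t := by rw [hu₂, Function.update_self]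
    have hv₂j : (v₂ j : ℕ) = t := by rw [hv₂, Function.update_self]
    have huvj : (u j : ℕ) = (v j : ℕ) := congrArg Fin.val (h.1 j hjk)
    have hadju : gridAdjDir j u u₂ := by
      refine ⟨fun l hl => (Function.update_of_ne hl _ _).symm, ?_⟩
      rw [hu₂j]; exact hadj
    have hadjv : gridAdjDir j v v₂ := by
      refine ⟨fun l hl => (Function.update_of_ne hl _ _).symm, ?_⟩
      rw [hv₂j]; omega
    have hadj2 : gridAdjDir k u₂ v₂ := by
      constructor
      · intro l hl
        by_cases hlj : l = j
        · subst hlj; rw [hu₂, hv₂, Function.update_self, Function.update_self]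
        · rw [hu₂, hv₂, Function.update_of_ne hlj, Function.update_of_ne hlj]
          exact h.1 l hl
      · rw [hu₂, hv₂, Function.update_of_ne hjk.symm, Function.update_of_ne hjk.symm]
        exact h.2
    have hstep : P u v * P v u = P u₂ v₂ * P v₂ u₂ :=
      square_g P hpos hc hjk h hadju hadjv hadj2
    have hk2 : u' k = u₂ k := by rw [hu₂, Function.update_of_ne hjk.symm]; exact hk
    have hk2' : v' k = v₂ k := by rw [hv₂, Function.update_of_ne hjk.symm]; exact hk'
    have hsum : (∑ l, Nat.dist (u₂ l : ℕ) (u' l : ℕ)) + 1 = d := by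
      rw [← hd, ← Finset.sum_erase_add _ _ (Finset.mem_univ j),
        ← Finset.sum_erase_add _ _ (Finset.mem_univ j)]
      have hcong : ∀ l ∈ Finset.univ.erase j,
          Nat.dist (u₂ l : ℕ) (u' l : ℕ) = Nat.dist (u l : ℕ) (u' l : ℕ) := by
        intro l hl
        rw [hu₂, Function.update_of_ne (Finset.ne_of_mem_erase hl)]
      rw [Finset.sum_congr rfl hcong, hu₂j]
      omega
    exact hstep.trans (ih _ (by omega) u₂ v₂ u' v' hadj2 h' hk2 hk2' rfl)


/-- the symmetric edge weight -/
noncomputable def Wf (u v : GridV m n) : ℝ := Real.sqrt (P u v * P v u)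

lemma Wf_symm (u v : GridV m n) : Wf P u v = Wf P v u := by
  rw [Wf, Wf, mul_comm]

include hpos in
lemma Wf_pos {u v : GridV m n} (h : gridAdj u v) : 0 < Wf P u v :=
  Real.sqrt_pos.2 (mul_pos (hpos _ _ h) (hpos _ _ (adj_symm h)))

include hpos in
lemma Wf_mul_self {u v : GridV m n} (h : gridAdj u v) :
    Wf P u v * Wf P v u = P u v * P v u := by
  rw [Wf_symm P v u, Wf]
  exact Real.mul_self_sqrt (le_of_lt (mul_pos (hpos _ _ h) (hpos _ _ (adj_symm h))))

/-- the multiplicative cocycle `a_v / a_u` along an edge -/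
noncomputable def cf (u v : GridV m n) : ℝ := Wf P u v / P u v

include hpos in
lemma cf_pos {u v : GridV m n} (h : gridAdj u v) : 0 < cf P u v :=
  div_pos (Wf_pos P hpos h) (hpos _ _ h)

include hpos hc in
lemma c_square {k j : Fin m} (hjk : j ≠ k) {b u x v : GridV m n}
    (hbu : gridAdjDir j b u) (huv : gridAdjDir k u v)
    (hbx : gridAdjDir k b x) (hxv : gridAdjDir j x v) :
    cf P b u * cf P u v = cf P b x * cf P x v := by
  have e1 : P b u * P u v = P b x * P x v := corner P hc hjk hbu huv hbx hxv
  have eW1 : Wf P b u = Wf P x v := by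
    rw [Wf, Wf, g_const P hpos hc hbu hxv (hbx.1 j hjk).symm (huv.1 j hjk).symm]
  have eW2 : Wf P u v = Wf P b x := by
    rw [Wf, Wf, g_const P hpos hc huv hbx (hbu.1 k hjk.symm) (hxv.1 k hjk.symm)]
  rw [cf, cf, cf, cf, div_mul_div_comm, div_mul_div_comm, e1, eW1, eW2,
    mul_comm (Wf P x v)]

/-- the `t`-th point of the canonical path, in segment `j` -/
def pt (j : Fin m) (t : ℕ) (u : GridV m n) : GridV m n :=
  fun l => if l < j then u l
    else if l = j then ⟨min t (n l), Nat.lt_succ_of_le (Nat.min_le_right _ _)⟩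
    else ⟨0, Nat.succ_pos _⟩

lemma pt_lt {j l : Fin m} (h : l < j) (t : ℕ) (u : GridV m n) : pt j t u l = u l := by
  rw [pt, if_pos h]

lemma pt_self (j : Fin m) (t : ℕ) (u : GridV m n) :
    (pt j t u j : ℕ) = min t (n j) := by
  rw [pt, if_neg (lt_irrefl j), if_pos rfl]

lemma pt_gt {j l : Fin m} (h : j < l) (t : ℕ) (u : GridV m n) : (pt j t u l : ℕ) = 0 := by
  rw [pt, if_neg (by exact fun hh => absurd (hh.trans h) (lt_irrefl l)),
    if_neg (by exact fun hh => absurd hh (ne_of_gt h))]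

lemma pt_congr {j : Fin m} {u u' : GridV m n} (h : ∀ l, l < j → u l = u' l) (t : ℕ) :
    pt j t u = pt j t u' := by
  funext l
  by_cases hl : l < j
  · rw [pt_lt hl, pt_lt hl]; exact h l hl
  · rw [pt, if_neg hl, pt, if_neg hl]

lemma pt_adj {j : Fin m} {t : ℕ} {u : GridV m n} (ht : t < (u j : ℕ)) :
    gridAdjDir j (pt j t u) (pt j (t + 1) u) := by
  have hn : t + 1 ≤ n j := by have := (u j).isLt; omega
  constructor
  · intro l hl
    by_cases h1 : l < j
    · rw [pt_lt h1, pt_lt h1]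
    · apply Fin.ext
      have h2 : j < l := lt_of_le_of_ne (not_lt.1 h1) (Ne.symm hl)
      rw [pt_gt h2, pt_gt h2]
  · left
    rw [pt_self, pt_self, Nat.min_eq_left (by omega), Nat.min_eq_left hn]

/-- canonical-path product of the cocycle: this is the function `a`. -/
noncomputable def base (u : GridV m n) : ℝ :=
  ∏ j : Fin m, ∏ t ∈ Finset.range (u j : ℕ), cf P (pt j t u) (pt j (t + 1) u)

include hpos in
lemma base_pos (u : GridV m n) : 0 < base P u := by
  apply Finset.prod_pos
  intro j _
  apply Finset.prod_pos
  intro t ht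
  exact cf_pos P hpos ⟨j, pt_adj (Finset.mem_range.1 ht)⟩

lemma base_peel {j : Fin m} {v v' : GridV m n}
    (hzero : ∀ l, j < l → (v l : ℕ) = 0)
    (h' : ∀ l, l ≠ j → v' l = v l) (hvj : (v' j : ℕ) + 1 = (v j : ℕ)) :
    base P v = base P v' * cf P v' v := by
  have hlow : ∀ l, l < j → v l = v' l := fun l hl => (h' l (ne_of_lt hl)).symm
  have hptv : ∀ t : ℕ, pt j t v = pt j t v' := fun t => pt_congr hlow t
  have hpt1 : pt j (v' j : ℕ) v = v' := by
    funext l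
    rcases lt_trichotomy l j with h1 | h1 | h1
    · rw [pt_lt h1]; exact hlow l h1
    · subst h1
      apply Fin.ext
      rw [pt_self, Nat.min_eq_left (by have := (v l).isLt; omega)]
    · apply Fin.ext
      rw [pt_gt h1, h' l (ne_of_gt h1), hzero l h1]
  have hpt2 : pt j ((v' j : ℕ) + 1) v = v := by
    funext l
    rcases lt_trichotomy l j with h1 | h1 | h1
    · rw [pt_lt h1]
    · subst h1
      apply Fin.ext
      rw [pt_self, hvj, Nat.min_eq_left (by have := (v l).isLt; omega)]
    · apply Fin.ext
      rw [pt_gt h1, hzero l h1]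
  have hIj : (∏ t ∈ Finset.range (v j : ℕ), cf P (pt j t v) (pt j (t + 1) v))
      = (∏ t ∈ Finset.range (v' j : ℕ), cf P (pt j t v') (pt j (t + 1) v')) * cf P v' v := by
    rw [← hvj, Finset.prod_range_succ, hpt1, hpt2]
    congr 1
    apply Finset.prod_congr rfl
    intro t _
    rw [hptv, hptv]
  have hrest : ∀ l ∈ Finset.univ.erase j,
      (∏ t ∈ Finset.range (v l : ℕ), cf P (pt l t v) (pt l (t + 1) v))
        = ∏ t ∈ Finset.range (v' l : ℕ), cf P (pt l t v') (pt l (t + 1) v') := by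
    intro l hl
    have hlj := Finset.ne_of_mem_erase hl
    rcases lt_or_gt_of_ne hlj with h1 | h1
    · -- l < j : identical data
      rw [h' l hlj]
      apply Finset.prod_congr rfl
      intro t _
      have : ∀ l', l' < l → v l' = v' l' := fun l' hl' => hlow l' (hl'.trans h1)
      rw [pt_congr this, pt_congr this]
    · -- l > j : both ranges empty
      rw [Finset.range_eq_empty_iff.2 ?_ , Finset.range_eq_empty_iff.2 ?_]
      · rw [Finset.prod_empty, Finset.prod_empty]
      · rw [h' l hlj]; exact hzero l h1
      · exact hzero l h1
  calc base P v
      = (∏ l ∈ Finset.univ.erase j, ∏ t ∈ Finset.range (v l : ℕ),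
          cf P (pt l t v) (pt l (t + 1) v))
        * ∏ t ∈ Finset.range (v j : ℕ), cf P (pt j t v) (pt j (t + 1) v) :=
      (Finset.prod_erase_mul _ _ (Finset.mem_univ j)).symm
    _ = (∏ l ∈ Finset.univ.erase j, ∏ t ∈ Finset.range (v' l : ℕ),
          cf P (pt l t v') (pt l (t + 1) v'))
        * ((∏ t ∈ Finset.range (v' j : ℕ), cf P (pt j t v') (pt j (t + 1) v')) * cf P v' v) := by
      rw [Finset.prod_congr rfl hrest, hIj]
    _ = base P v' * cf P v' v := by
      rw [← mul_assoc, Finset.prod_erase_mul _ _ (Finset.mem_univ j)]; rw [base]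


lemma sum_shift {u v : GridV m n} {k : Fin m} (h : ∀ l, l ≠ k → u l = v l) :
    (∑ l, (u l : ℕ)) + (v k : ℕ) = (∑ l, (v l : ℕ)) + (u k : ℕ) := by
  rw [← Finset.sum_erase_add _ _ (Finset.mem_univ k),
    ← Finset.sum_erase_add _ _ (Finset.mem_univ k)]
  have hcong : ∀ l ∈ Finset.univ.erase k, (u l : ℕ) = (v l : ℕ) :=
    fun l hl => congrArg Fin.val (h l (Finset.ne_of_mem_erase hl))
  rw [Finset.sum_congr rfl hcong]
  ring

include hpos hc in
lemma base_edge : ∀ N : ℕ, ∀ u v : GridV m n, ∀ k : Fin m, gridAdjDir k u v →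
    (u k : ℕ) + 1 = (v k : ℕ) → (∑ l, (v l : ℕ)) = N →
    base P v = base P u * cf P u v := by
  intro N
  induction N using Nat.strong_induction_on with
  | _ N ih =>
  intro u v k hk hup hN
  have hne : (Finset.univ.filter fun l => (v l : ℕ) ≠ 0).Nonempty :=
    ⟨k, by simp only [Finset.mem_filter, Finset.mem_univ, true_and]; omega⟩
  set j := (Finset.univ.filter fun l => (v l : ℕ) ≠ 0).max' hne with hjdef
  have hjmem := Finset.max'_mem _ hne
  have hjpos : (v j : ℕ) ≠ 0 := (Finset.mem_filter.1 hjmem).2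
  have hzero : ∀ l, j < l → (v l : ℕ) = 0 := by
    intro l hl
    by_contra h0
    exact absurd (Finset.le_max' _ l (Finset.mem_filter.2 ⟨Finset.mem_univ l, h0⟩))
      (not_le.2 hl)
  by_cases hjk : j = k
  · subst hjk
    exact base_peel P hzero (fun l hl => hk.1 l hl) hup
  · have hkj : k ≠ j := fun hh => hjk hh.symm
    have huj : u j = v j := hk.1 j hjk
    have hujv : (u j : ℕ) = (v j : ℕ) := congrArg Fin.val huj
    have hvjlt := (v j).isLt
    have htlt : ((v j : ℕ) - 1) < n j + 1 := by omega
    set t := (v j : ℕ) - 1 with htdef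
    set b := Function.update u j (⟨t, htlt⟩ : Fin (n j + 1)) with hbdef
    set x := Function.update v j (⟨t, htlt⟩ : Fin (n j + 1)) with hxdef
    have hbj : (b j : ℕ) = t := by rw [hbdef, Function.update_self]
    have hxj : (x j : ℕ) = t := by rw [hxdef, Function.update_self]
    have hbk : (b k : ℕ) = (u k : ℕ) := by rw [hbdef, Function.update_of_ne hkj]
    have hxk : (x k : ℕ) = (v k : ℕ) := by rw [hxdef, Function.update_of_ne hkj]
    have hbu : gridAdjDir j b u :=
      ⟨fun l hl => Function.update_of_ne hl _ _, Or.inl (by rw [hbj]; omega)⟩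
    have hxv : gridAdjDir j x v :=
      ⟨fun l hl => Function.update_of_ne hl _ _, Or.inl (by rw [hxj]; omega)⟩
    have hbx : gridAdjDir k b x := by
      constructor
      · intro l hl
        by_cases hlj : l = j
        · subst hlj; rw [hbdef, hxdef, Function.update_self, Function.update_self]
        · rw [hbdef, hxdef, Function.update_of_ne hlj, Function.update_of_ne hlj]
          exact hk.1 l hl
      · omega
    have hsum1 : (∑ l, (x l : ℕ)) + (v j : ℕ) = (∑ l, (v l : ℕ)) + (x j : ℕ) :=
      sum_shift (fun l hl => Function.update_of_ne hl _ _)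
    have hsum2 : (∑ l, (u l : ℕ)) + (v k : ℕ) = (∑ l, (v l : ℕ)) + (u k : ℕ) :=
      sum_shift hk.1
    have hx_lt : (∑ l, (x l : ℕ)) < N := by omega
    have hu_lt : (∑ l, (u l : ℕ)) < N := by omega
    have ih1 : base P x = base P b * cf P b x := ih _ hx_lt b x k hbx (by omega) rfl
    have ih2 : base P u = base P b * cf P b u := ih _ hu_lt b u j hbu (by rw [hbj]; omega) rfl
    have hpeel : base P v = base P x * cf P x v :=
      base_peel P hzero (fun l hl => Function.update_of_ne hl _ _) (by rw [hxj]; omega)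
    have hsq : cf P b u * cf P u v = cf P b x * cf P x v :=
      c_square P hpos hc hjk hbu hk hbx hxv
    rw [hpeel, ih1, ih2, mul_assoc, mul_assoc, ← hsq]

include hpos hc in
lemma P_eq {k : Fin m} {u v : GridV m n} (h : gridAdjDir k u v) :
    P u v = base P u * Wf P u v * (base P v)⁻¹ := by
  have hP : 0 < P u v := hpos _ _ ⟨k, h⟩
  have hP' : 0 < P v u := hpos _ _ ⟨k, adjDir_symm h⟩
  have hbu : 0 < base P u := base_pos P hpos u
  have hbv : 0 < base P v := base_pos P hpos v
  have hW : 0 < Wf P u v := Wf_pos P hpos ⟨k, h⟩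
  have hW' : 0 < Wf P v u := Wf_pos P hpos ⟨k, adjDir_symm h⟩
  rcases h.2 with hup | hdown
  · have hb := base_edge P hpos hc _ u v k h hup rfl
    rw [hb, cf]
    field_simp
  · have hb := base_edge P hpos hc _ v u k (adjDir_symm h) hdown rfl
    have hWW : Wf P u v * Wf P v u = P u v * P v u := Wf_mul_self P hpos ⟨k, h⟩
    rw [hb, cf]
    field_simp
    linear_combination (-1 : ℝ) * hWW

lemma path_shift {i j : Fin m} (hij : i ≠ j) {u w : GridV m n}
    (h1 : gridAdjDir i u (midPt i u w)) (h2 : gridAdjDir j (midPt i u w) w) :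
    gridAdjDir j u (midPt j u w) ∧ gridAdjDir i (midPt j u w) w := by
  set x := midPt i u w with hxd
  set y := midPt j u w with hyd
  have hyj : y j = w j := Function.update_self _ _ _
  have hyl : ∀ l, l ≠ j → y l = u l := fun l hl => Function.update_of_ne hl _ _
  have hxi : x i = w i := Function.update_self _ _ _
  have hxl : ∀ l, l ≠ i → x l = u l := fun l hl => Function.update_of_ne hl _ _
  have hxjv : (x j : ℕ) = (u j : ℕ) := congrArg Fin.val (hxl j hij.symm)
  have hxiv : (x i : ℕ) = (w i : ℕ) := congrArg Fin.val hxi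
  have hyjv : (y j : ℕ) = (w j : ℕ) := congrArg Fin.val hyj
  have hyiv : (y i : ℕ) = (u i : ℕ) := congrArg Fin.val (hyl i hij)
  have hlvlj := h2.2
  have hlvli := h1.2
  constructor
  · exact ⟨fun l hl => (hyl l hl).symm, by omega⟩
  · refine ⟨?_, by omega⟩
    intro l hl
    by_cases hlj : l = j
    · subst hlj; exact hyj
    · exact (hyl l hlj).trans ((hxl l hl).symm.trans (h2.1 l hlj))

end CommuteParam

/-- **Theorem 3.1.** For strictly positive nearest-neighbor transition
probabilities, the directional matrices commute pairwise iff
`P(u,v) = a_u W(u,v) a_v⁻¹` for positive constants `a_u`, `W(u,v)`, where `W` is symmetric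
and takes equal values on parallel edges (edges in direction `e_k` at the same height,
shifted by any `w ∈ ∑_{ℓ≠k} ℤ e_ℓ`). -/
theorem commute_iff_param {m : ℕ} (n : Fin m → ℕ)
    (P : GridV m n → GridV m n → ℝ)
    (hpos : ∀ u v, gridAdj u v → 0 < P u v) :
    (∀ i j : Fin m,
      dirMatrix n P i * dirMatrix n P j = dirMatrix n P j * dirMatrix n P i) ↔
    ∃ (a : GridV m n → ℝ) (W : GridV m n → GridV m n → ℝ),
      (∀ u, 0 < a u) ∧
      (∀ u v, gridAdj u v → 0 < W u v) ∧
      (∀ u v, gridAdj u v → P u v = a u * W u v * (a v)⁻¹) ∧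
      (∀ u v, gridAdj u v → W u v = W v u) ∧
      (∀ u' v' u'' v'' : GridV m n,
        (∃ k, gridAdjDir k u' v' ∧ gridAdjDir k u'' v'' ∧
          u'' k = u' k ∧ v'' k = v' k) → W u' v' = W u'' v'') := by
  constructor
  · intro hc
    refine ⟨CommuteParam.base P, CommuteParam.Wf P, CommuteParam.base_pos P hpos,
      fun u v h => CommuteParam.Wf_pos P hpos h, ?_,
      fun u v h => CommuteParam.Wf_symm P u v, ?_⟩
    · rintro u v ⟨k, h⟩
      exact CommuteParam.P_eq P hpos hc h
    · rintro u' v' u'' v'' ⟨k, h1, h2, hk, hk'⟩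
      unfold CommuteParam.Wf
      rw [CommuteParam.g_const P hpos hc h1 h2 hk hk']
  · rintro ⟨a, W, ha, hW, hPW, hWs, hWinv⟩ i j
    by_cases hij : i = j
    · subst hij; rfl
    · ext u w
      rw [CommuteParam.dir_mul_apply P hij u w,
        CommuteParam.dir_mul_apply P (Ne.symm hij) u w]
      by_cases h1 : gridAdjDir i u (CommuteParam.midPt i u w)
      · by_cases h2 : gridAdjDir j (CommuteParam.midPt i u w) w
        · obtain ⟨h3, h4⟩ := CommuteParam.path_shift hij h1 h2
          rw [CommuteParam.dirMatrix_pos P h1, CommuteParam.dirMatrix_pos P h2,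
            CommuteParam.dirMatrix_pos P h3, CommuteParam.dirMatrix_pos P h4]
          have e1 : W u (CommuteParam.midPt i u w)
              = W (CommuteParam.midPt j u w) w :=
            hWinv _ _ _ _ ⟨i, h1, h4, CommuteParam.midPt_apply_ne hij u w,
              (CommuteParam.midPt_apply_self i u w).symm⟩
          have e2 : W (CommuteParam.midPt i u w) w
              = W u (CommuteParam.midPt j u w) :=
            hWinv _ _ _ _ ⟨j, h2, h3, (CommuteParam.midPt_apply_ne (Ne.symm hij) u w).symm,
              CommuteParam.midPt_apply_self j u w⟩
          rw [hPW _ _ ⟨i, h1⟩, hPW _ _ ⟨j, h2⟩, hPW _ _ ⟨j, h3⟩, hPW _ _ ⟨i, h4⟩, e1, e2]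
          have hax := ne_of_gt (ha (CommuteParam.midPt i u w))
          have hay := ne_of_gt (ha (CommuteParam.midPt j u w))
          field_simp [hax, hay, ne_of_gt (ha u), ne_of_gt (ha w)]
        · rw [CommuteParam.dirMatrix_neg P h2, mul_zero]
          by_cases h3 : gridAdjDir j u (CommuteParam.midPt j u w)
          · by_cases h4 : gridAdjDir i (CommuteParam.midPt j u w) w
            · exact absurd (CommuteParam.path_shift (Ne.symm hij) h3 h4).2 h2
            · rw [CommuteParam.dirMatrix_neg P h4, mul_zero]
          · rw [CommuteParam.dirMatrix_neg P h3, zero_mul]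
      · rw [CommuteParam.dirMatrix_neg P h1, zero_mul]
        by_cases h3 : gridAdjDir j u (CommuteParam.midPt j u w)
        · by_cases h4 : gridAdjDir i (CommuteParam.midPt j u w) w
          · exact absurd (CommuteParam.path_shift (Ne.symm hij) h3 h4).1 h1
          · rw [CommuteParam.dirMatrix_neg P h4, mul_zero]
        · rw [CommuteParam.dirMatrix_neg P h3, zero_mul]
end

section
/- With 𝒜 = 𝒜^{(n_1,...,n_m)} as above, the Gram matrix 𝒜𝒜^T is block diagonal: the block indexed by the vertex rows equals 2(Δ − J), twice the Laplacian of the grid graph E (Δ the diagonal matrix of vertex degrees, J the adjacency matrix), the block indexed by the edge-parameter rows in direction k equals 2∏_{ℓ≠k}(n_ℓ+1) times the identity, and all off-diagonal blocks vanish. -/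
open Matrix

/-- Directed edges of the grid. -/
abbrev DirEdge (m : ℕ) (n : Fin m → ℕ) := {p : GridV m n × GridV m n // gridAdj p.1 p.2}

/-- Row indices of the parametrization matrix `𝒜`. -/
abbrev ParamRow (m : ℕ) (n : Fin m → ℕ) := (GridV m n) ⊕ (Σ k : Fin m, Fin (n k))

/-- The parametrization matrix `𝒜^{(n₁,…,n_m)}`. -/
def paramMatrix (m : ℕ) (n : Fin m → ℕ) : Matrix (ParamRow m n) (DirEdge m n) ℝ :=
  fun r e =>
    match r with
    | Sum.inl u => (if u = e.1.1 then 1 else 0) - (if u = e.1.2 then 1 else 0)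
    | Sum.inr ⟨k, h⟩ =>
        if gridAdjDir k e.1.1 e.1.2 ∧ min (e.1.1 k : ℕ) (e.1.2 k : ℕ) = (h : ℕ)
        then 1 else 0

/-- Degree of a vertex in the grid graph. -/
def gridDegree {m : ℕ} (n : Fin m → ℕ) (u : GridV m n) : ℕ :=
  (Finset.univ.filter fun v : GridV m n => gridAdj u v).card

lemma gridAdjDir_symm {m : ℕ} {n : Fin m → ℕ} {k : Fin m} {u v : GridV m n}
    (h : gridAdjDir k u v) : gridAdjDir k v u :=
  ⟨fun l hl => (h.1 l hl).symm, h.2.symm⟩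

lemma gridAdj_symm {m : ℕ} {n : Fin m → ℕ} {u v : GridV m n}
    (h : gridAdj u v) : gridAdj v u := h.imp fun _ => gridAdjDir_symm

lemma gridAdj_ne {m : ℕ} {n : Fin m → ℕ} {u v : GridV m n}
    (h : gridAdj u v) : u ≠ v := by
  obtain ⟨k, _, h2⟩ := h
  intro he; subst he; omega

lemma gridAdjDir_unique {m : ℕ} {n : Fin m → ℕ} {k k' : Fin m} {u v : GridV m n}
    (h : gridAdjDir k u v) (h' : gridAdjDir k' u v) : k = k' := by
  by_contra hkk
  have := h'.1 k (fun e => hkk e)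
  have h2 := h.2
  rw [this] at h2
  omega

-- sum over directed edges as sum over pairs
lemma sum_dirEdge {m : ℕ} {n : Fin m → ℕ} (F : GridV m n × GridV m n → ℝ) :
    ∑ e : DirEdge m n, F e.1 =
      ∑ p : GridV m n × GridV m n, if gridAdj p.1 p.2 then F p else 0 := by
  rw [← Finset.sum_filter]
  exact (Finset.sum_subtype _ (by simp) F).symm

lemma count_coord {m : ℕ} {n : Fin m → ℕ} (k : Fin m) (c : ℕ) (hc : c ≤ n k) :
    ∑ a : GridV m n, (if (a k : ℕ) = c then (1:ℝ) else 0)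
      = ∏ l ∈ Finset.univ.erase k, ((n l : ℝ) + 1) := by
  set e := Equiv.piSplitAt k (fun l : Fin m => Fin (n l + 1)) with he
  rw [← Equiv.sum_comp e.symm (fun a : GridV m n => if (a k : ℕ) = c then (1:ℝ) else 0)]
  have heval : ∀ p : Fin (n k + 1) × (∀ l : {l : Fin m // l ≠ k}, Fin (n l.1 + 1)),
      e.symm p k = p.1 := by
    intro p; simp [he, Equiv.piSplitAt_symm_apply]
  simp only [heval]
  rw [Fintype.sum_prod_type]
  have h1 : ∀ x : Fin (n k + 1),
      ∑ _g : (∀ l : {l : Fin m // l ≠ k}, Fin (n l.1 + 1)), (if (x : ℕ) = c then (1:ℝ) else 0)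
        = (if (x : ℕ) = c then (1:ℝ) else 0) * ∏ l ∈ Finset.univ.erase k, ((n l : ℝ) + 1) := by
    intro x
    rw [Finset.sum_const, nsmul_eq_mul, mul_comm]
    congr 1
    rw [Finset.card_univ, Fintype.card_pi]
    push_cast
    have hps := Finset.prod_subtype (p := fun l : Fin m => l ≠ k) (F := inferInstance)
      (Finset.univ.erase k) (by simp) (fun l => ((n l : ℝ) + 1))
    rw [hps]
    simp
  simp only [h1]
  rw [← Finset.sum_mul]
  have h2 : ∑ x : Fin (n k + 1), (if (x : ℕ) = c then (1:ℝ) else 0) = 1 := by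
    have : ∀ x : Fin (n k + 1), ((x : ℕ) = c) ↔ x = ⟨c, by omega⟩ := by
      intro x; constructor
      · intro h; exact Fin.ext h
      · intro h; subst h; rfl
    simp only [this]
    rw [Finset.sum_ite_eq' Finset.univ (⟨c, by omega⟩ : Fin (n k + 1)) (fun _ => (1:ℝ))]
    simp
  rw [h2, one_mul]

lemma vv {m : ℕ} {n : Fin m → ℕ} (u v : GridV m n) :
    ∑ p : GridV m n × GridV m n,
      (if gridAdj p.1 p.2 then
        ((if u = p.1 then (1:ℝ) else 0) - (if u = p.2 then 1 else 0)) *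
        ((if v = p.1 then (1:ℝ) else 0) - (if v = p.2 then 1 else 0)) else 0)
    = 2 * ((if u = v then (gridDegree n u : ℝ) else 0) - (if gridAdj u v then 1 else 0)) := by
  classical
  set A : GridV m n → GridV m n → ℝ := fun a b => if gridAdj a b then 1 else 0 with hA
  have hsymm : ∀ a b, A a b = A b a := by
    intro a b
    by_cases h : gridAdj a b
    · simp [hA, h, gridAdj_symm h]
    · have h2 : ¬ gridAdj b a := fun hc => h (gridAdj_symm hc)
      simp [hA, h, h2]
  have hD : ∀ a, ∑ b, A a b = (gridDegree n a : ℝ) := by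
    intro a; rw [hA]; rw [Finset.sum_boole]; simp [gridDegree]
  have hD' : ∀ b, ∑ a, A a b = (gridDegree n b : ℝ) := by
    intro b; simp_rw [fun a => hsymm a b]; exact hD b
  have hstep : ∀ p : GridV m n × GridV m n,
      (if gridAdj p.1 p.2 then
        ((if u = p.1 then (1:ℝ) else 0) - (if u = p.2 then 1 else 0)) *
        ((if v = p.1 then (1:ℝ) else 0) - (if v = p.2 then 1 else 0)) else 0)
      = (if u = p.1 then (1:ℝ) else 0) * ((if v = p.1 then (1:ℝ) else 0) * A p.1 p.2)
        - (if u = p.1 then (1:ℝ) else 0) * ((if v = p.2 then (1:ℝ) else 0) * A p.1 p.2)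
        - (if u = p.2 then (1:ℝ) else 0) * ((if v = p.1 then (1:ℝ) else 0) * A p.1 p.2)
        + (if u = p.2 then (1:ℝ) else 0) * ((if v = p.2 then (1:ℝ) else 0) * A p.1 p.2) := by
    intro p
    by_cases h : gridAdj p.1 p.2
    · rw [if_pos h]; simp only [hA, if_pos h, mul_one]; ring
    · rw [if_neg h]; simp only [hA]; rw [if_neg h]; simp only [mul_zero]; ring
  simp only [hstep]
  simp only [Finset.sum_add_distrib, Finset.sum_sub_distrib]
  have S1 : ∑ p : GridV m n × GridV m n,
      (if u = p.1 then (1:ℝ) else 0) * ((if v = p.1 then (1:ℝ) else 0) * A p.1 p.2)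
      = (if u = v then (gridDegree n u : ℝ) else 0) := by
    rw [Fintype.sum_prod_type]
    have h1 : ∀ a : GridV m n,
        ∑ b, (if u = a then (1:ℝ) else 0) * ((if v = a then (1:ℝ) else 0) * A a b)
        = (if u = a then (1:ℝ) else 0) * ((if v = a then (1:ℝ) else 0) * (gridDegree n a : ℝ)) := by
      intro a; rw [← Finset.mul_sum, ← Finset.mul_sum, hD]
    simp only [h1]
    simp only [ite_mul, one_mul, zero_mul]
    rw [Finset.sum_ite_eq]
    simp only [Finset.mem_univ, if_true]
    by_cases h : u = v
    · subst h; simp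
    · have h2 : v ≠ u := fun hh => h hh.symm
      simp [h, h2]
  have S2 : ∑ p : GridV m n × GridV m n,
      (if u = p.1 then (1:ℝ) else 0) * ((if v = p.2 then (1:ℝ) else 0) * A p.1 p.2)
      = A u v := by
    rw [Fintype.sum_prod_type]
    have h1 : ∀ a : GridV m n,
        ∑ b, (if u = a then (1:ℝ) else 0) * ((if v = b then (1:ℝ) else 0) * A a b)
        = (if u = a then (1:ℝ) else 0) * A a v := by
      intro a
      rw [← Finset.mul_sum]
      congr 1
      simp only [ite_mul, one_mul, zero_mul]
      rw [Finset.sum_ite_eq]; simp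
    simp only [h1]
    simp only [ite_mul, one_mul, zero_mul]
    rw [Finset.sum_ite_eq]; simp
  have S3 : ∑ p : GridV m n × GridV m n,
      (if u = p.2 then (1:ℝ) else 0) * ((if v = p.1 then (1:ℝ) else 0) * A p.1 p.2)
      = A u v := by
    rw [Fintype.sum_prod_type]
    have h1 : ∀ a : GridV m n,
        ∑ b, (if u = b then (1:ℝ) else 0) * ((if v = a then (1:ℝ) else 0) * A a b)
        = (if v = a then (1:ℝ) else 0) * A a u := by
      intro a
      simp only [ite_mul, one_mul, zero_mul]
      rw [Finset.sum_ite_eq]; simp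
    simp only [h1]
    simp only [ite_mul, one_mul, zero_mul]
    rw [Finset.sum_ite_eq]
    simp [hsymm u v]
  have S4 : ∑ p : GridV m n × GridV m n,
      (if u = p.2 then (1:ℝ) else 0) * ((if v = p.2 then (1:ℝ) else 0) * A p.1 p.2)
      = (if u = v then (gridDegree n u : ℝ) else 0) := by
    rw [Fintype.sum_prod_type, Finset.sum_comm]
    have h1 : ∀ b : GridV m n,
        ∑ a, (if u = b then (1:ℝ) else 0) * ((if v = b then (1:ℝ) else 0) * A a b)
        = (if u = b then (1:ℝ) else 0) * ((if v = b then (1:ℝ) else 0) * (gridDegree n b : ℝ)) := by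
      intro b; rw [← Finset.mul_sum, ← Finset.mul_sum, hD']
    simp only [h1]
    simp only [ite_mul, one_mul, zero_mul]
    rw [Finset.sum_ite_eq]
    simp only [Finset.mem_univ, if_true]
    by_cases h : u = v
    · subst h; simp
    · have h2 : v ≠ u := fun hh => h hh.symm
      simp [h, h2]
  rw [S1, S2, S3, S4, hA]
  ring

lemma cross {m : ℕ} {n : Fin m → ℕ} (u : GridV m n) (k : Fin m) (h : Fin (n k)) :
    ∑ p : GridV m n × GridV m n,
      (if gridAdj p.1 p.2 then
        ((if u = p.1 then (1:ℝ) else 0) - (if u = p.2 then 1 else 0)) *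
        (if gridAdjDir k p.1 p.2 ∧ min (p.1 k : ℕ) (p.2 k : ℕ) = (h : ℕ) then 1 else 0) else 0)
    = 0 := by
  classical
  set g : GridV m n × GridV m n → ℝ := fun p =>
    if gridAdj p.1 p.2 then
      ((if u = p.1 then (1:ℝ) else 0) - (if u = p.2 then 1 else 0)) *
      (if gridAdjDir k p.1 p.2 ∧ min (p.1 k : ℕ) (p.2 k : ℕ) = (h : ℕ) then 1 else 0) else 0
    with hg
  have hneg : ∀ p : GridV m n × GridV m n, g (p.2, p.1) = - g p := by
    intro p
    by_cases had : gridAdj p.1 p.2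
    · have had' : gridAdj p.2 p.1 := gridAdj_symm had
      have hcond : (gridAdjDir k p.2 p.1 ∧ min (p.2 k : ℕ) (p.1 k : ℕ) = (h : ℕ)) ↔
          (gridAdjDir k p.1 p.2 ∧ min (p.1 k : ℕ) (p.2 k : ℕ) = (h : ℕ)) := by
        constructor <;> rintro ⟨h1, h2⟩ <;> exact ⟨gridAdjDir_symm h1, by rwa [min_comm]⟩
      simp only [hg, if_pos had, if_pos had']
      rw [if_congr hcond rfl rfl]
      ring
    · have had' : ¬ gridAdj p.2 p.1 := fun hc => had (gridAdj_symm hc)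
      simp [hg, had, had']
  have h0 : ∑ p : GridV m n × GridV m n, g p = - ∑ p : GridV m n × GridV m n, g p := by
    calc ∑ p : GridV m n × GridV m n, g p
        = ∑ p : GridV m n × GridV m n, g ((Equiv.prodComm _ _) p) :=
          (Equiv.sum_comp (Equiv.prodComm _ _) g).symm
      _ = ∑ p : GridV m n × GridV m n, - g p := by
          refine Finset.sum_congr rfl fun p _ => ?_
          exact hneg p
      _ = - ∑ p : GridV m n × GridV m n, g p := by rw [Finset.sum_neg_distrib]
  linarith

lemma inner_count {m : ℕ} {n : Fin m → ℕ} (k : Fin m) (h : Fin (n k)) (a : GridV m n) :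
    ∑ b : GridV m n,
      (if gridAdjDir k a b ∧ min (a k : ℕ) (b k : ℕ) = (h : ℕ) then (1:ℝ) else 0)
    = (if (a k : ℕ) = (h : ℕ) then (1:ℝ) else 0) +
      (if (a k : ℕ) = (h : ℕ) + 1 then (1:ℝ) else 0) := by
  classical
  have hh : (h : ℕ) < n k := h.isLt
  by_cases h1 : (a k : ℕ) = (h : ℕ)
  · set b₀ : GridV m n := Function.update a k ⟨(h : ℕ) + 1, by omega⟩ with hb₀
    have hiff : ∀ b : GridV m n,
        (gridAdjDir k a b ∧ min (a k : ℕ) (b k : ℕ) = (h : ℕ)) ↔ b = b₀ := by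
      intro b
      constructor
      · rintro ⟨⟨hoff, hstep⟩, hmin⟩
        funext l
        by_cases hl : l = k
        · subst hl
          have : (b l : ℕ) = (h : ℕ) + 1 := by omega
          have hb : (b₀ l : ℕ) = (h : ℕ) + 1 := by rw [hb₀, Function.update_self]
          exact Fin.ext (by omega)
        · rw [← hoff l hl, hb₀, Function.update_of_ne hl]
      · rintro rfl
        refine ⟨⟨fun l hl => (Function.update_of_ne hl _ a).symm, ?_⟩, ?_⟩
        · left; rw [hb₀, Function.update_self]; simp; omega
        · rw [hb₀, Function.update_self]; simp; omega
    simp only [hiff]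
    rw [Finset.sum_ite_eq' Finset.univ b₀ (fun _ => (1:ℝ))]
    have h2 : ¬ ((a k : ℕ) = (h : ℕ) + 1) := by omega
    simp [h1, h2]
  · by_cases h2 : (a k : ℕ) = (h : ℕ) + 1
    · set b₀ : GridV m n := Function.update a k ⟨(h : ℕ), by omega⟩ with hb₀
      have hiff : ∀ b : GridV m n,
          (gridAdjDir k a b ∧ min (a k : ℕ) (b k : ℕ) = (h : ℕ)) ↔ b = b₀ := by
        intro b
        constructor
        · rintro ⟨⟨hoff, hstep⟩, hmin⟩
          funext l
          by_cases hl : l = k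
          · subst hl
            have hb : (b₀ l : ℕ) = (h : ℕ) := by rw [hb₀, Function.update_self]
            exact Fin.ext (by omega)
          · rw [← hoff l hl, hb₀, Function.update_of_ne hl]
        · rintro rfl
          refine ⟨⟨fun l hl => (Function.update_of_ne hl _ a).symm, ?_⟩, ?_⟩
          · right; rw [hb₀, Function.update_self]; simp; omega
          · rw [hb₀, Function.update_self]; simp; omega
      simp only [hiff]
      rw [Finset.sum_ite_eq' Finset.univ b₀ (fun _ => (1:ℝ))]
      simp [h1, h2]
    · have hnone : ∀ b : GridV m n,
          ¬ (gridAdjDir k a b ∧ min (a k : ℕ) (b k : ℕ) = (h : ℕ)) := by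
        rintro b ⟨⟨hoff, hstep⟩, hmin⟩
        omega
      simp [hnone, h1, h2]

lemma ee {m : ℕ} {n : Fin m → ℕ} (e f : Σ k : Fin m, Fin (n k)) :
    ∑ p : GridV m n × GridV m n,
      (if gridAdj p.1 p.2 then
        (if gridAdjDir e.1 p.1 p.2 ∧ min (p.1 e.1 : ℕ) (p.2 e.1 : ℕ) = (e.2 : ℕ) then (1:ℝ) else 0) *
        (if gridAdjDir f.1 p.1 p.2 ∧ min (p.1 f.1 : ℕ) (p.2 f.1 : ℕ) = (f.2 : ℕ) then (1:ℝ) else 0) else 0)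
    = if e = f then 2 * ∏ l ∈ Finset.univ.erase e.1, ((n l : ℝ) + 1) else 0 := by
  classical
  by_cases hef : e = f
  · subst hef
    rw [if_pos rfl]
    obtain ⟨k, h⟩ := e
    have hsummand : ∀ p : GridV m n × GridV m n,
        (if gridAdj p.1 p.2 then
          (if gridAdjDir k p.1 p.2 ∧ min (p.1 k : ℕ) (p.2 k : ℕ) = (h : ℕ) then (1:ℝ) else 0) *
          (if gridAdjDir k p.1 p.2 ∧ min (p.1 k : ℕ) (p.2 k : ℕ) = (h : ℕ) then (1:ℝ) else 0) else 0)
        = (if gridAdjDir k p.1 p.2 ∧ min (p.1 k : ℕ) (p.2 k : ℕ) = (h : ℕ) then (1:ℝ) else 0) := by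
      intro p
      by_cases hc : gridAdjDir k p.1 p.2 ∧ min (p.1 k : ℕ) (p.2 k : ℕ) = (h : ℕ)
      · have ha : gridAdj p.1 p.2 := ⟨k, hc.1⟩
        rw [if_pos ha, if_pos hc]; norm_num
      · rw [if_neg hc]
        by_cases ha : gridAdj p.1 p.2
        · rw [if_pos ha]; norm_num
        · rw [if_neg ha]
    simp only [hsummand]
    rw [Fintype.sum_prod_type]
    simp only [inner_count k h]
    rw [Finset.sum_add_distrib,
      count_coord k (h : ℕ) (by have := h.isLt; omega),
      count_coord k ((h : ℕ) + 1) (by have := h.isLt; omega)]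
    ring
  · rw [if_neg hef]
    apply Finset.sum_eq_zero
    intro p _
    obtain ⟨k, h⟩ := e
    obtain ⟨k', h'⟩ := f
    by_cases ha : gridAdj p.1 p.2
    · rw [if_pos ha]
      by_cases hc : gridAdjDir k p.1 p.2 ∧ min (p.1 k : ℕ) (p.2 k : ℕ) = (h : ℕ)
      · have hnc : ¬ (gridAdjDir k' p.1 p.2 ∧ min (p.1 k' : ℕ) (p.2 k' : ℕ) = (h' : ℕ)) := by
          rintro ⟨hd, hm⟩
          have hk : k = k' := gridAdjDir_unique hc.1 hd
          subst hk
          have h2 := hc.2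
          exact hef (congrArg (Sigma.mk k) (Fin.ext (by omega)))
        simp [hnc]
      · simp [hc]
    · rw [if_neg ha]

/-- The Gram matrix `𝒜𝒜ᵀ` is block diagonal: the vertex-row block is
`2(Δ − J)` (twice the grid Laplacian), the edge-parameter block is
`2 ∏_{ℓ≠k}(n_ℓ+1)` times the identity, and the off-diagonal blocks vanish. -/
theorem paramMatrix_gram {m : ℕ} (n : Fin m → ℕ) :
    (∀ u v : GridV m n,
      (paramMatrix m n * (paramMatrix m n)ᵀ) (Sum.inl u) (Sum.inl v) =
        2 * ((if u = v then (gridDegree n u : ℝ) else 0) -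
          (if gridAdj u v then 1 else 0))) ∧
    (∀ e f : Σ k : Fin m, Fin (n k),
      (paramMatrix m n * (paramMatrix m n)ᵀ) (Sum.inr e) (Sum.inr f) =
        if e = f then 2 * ∏ l ∈ Finset.univ.erase e.1, ((n l : ℝ) + 1) else 0) ∧
    (∀ (u : GridV m n) (e : Σ k : Fin m, Fin (n k)),
      (paramMatrix m n * (paramMatrix m n)ᵀ) (Sum.inl u) (Sum.inr e) = 0) ∧
    (∀ (u : GridV m n) (e : Σ k : Fin m, Fin (n k)),
      (paramMatrix m n * (paramMatrix m n)ᵀ) (Sum.inr e) (Sum.inl u) = 0) := by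
  refine ⟨?_, ?_, ?_, ?_⟩
  · intro u v
    rw [mul_apply]
    simp only [transpose_apply, paramMatrix]
    rw [sum_dirEdge (fun p => ((if u = p.1 then (1:ℝ) else 0) - (if u = p.2 then 1 else 0)) *
      ((if v = p.1 then (1:ℝ) else 0) - (if v = p.2 then 1 else 0)))]
    exact vv u v
  · intro e f
    rw [mul_apply]
    obtain ⟨k, h⟩ := e
    obtain ⟨k', h'⟩ := f
    simp only [transpose_apply, paramMatrix]
    rw [sum_dirEdge (fun p =>
      (if gridAdjDir k p.1 p.2 ∧ min (p.1 k : ℕ) (p.2 k : ℕ) = (h : ℕ) then (1:ℝ) else 0) *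
      (if gridAdjDir k' p.1 p.2 ∧ min (p.1 k' : ℕ) (p.2 k' : ℕ) = (h' : ℕ) then (1:ℝ) else 0))]
    exact ee ⟨k, h⟩ ⟨k', h'⟩
  · intro u e
    rw [mul_apply]
    obtain ⟨k, h⟩ := e
    simp only [transpose_apply, paramMatrix]
    rw [sum_dirEdge (fun p => ((if u = p.1 then (1:ℝ) else 0) - (if u = p.2 then 1 else 0)) *
      (if gridAdjDir k p.1 p.2 ∧ min (p.1 k : ℕ) (p.2 k : ℕ) = (h : ℕ) then (1:ℝ) else 0))]
    exact cross u k h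
  · intro u e
    rw [mul_apply]
    obtain ⟨k, h⟩ := e
    simp only [transpose_apply, paramMatrix]
    rw [sum_dirEdge (fun p =>
      (if gridAdjDir k p.1 p.2 ∧ min (p.1 k : ℕ) (p.2 k : ℕ) = (h : ℕ) then (1:ℝ) else 0) *
      ((if u = p.1 then (1:ℝ) else 0) - (if u = p.2 then 1 else 0)))]
    have hcomm : ∀ p : GridV m n × GridV m n,
        (if gridAdj p.1 p.2 then
          (if gridAdjDir k p.1 p.2 ∧ min (p.1 k : ℕ) (p.2 k : ℕ) = (h : ℕ) then (1:ℝ) else 0) *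
          ((if u = p.1 then (1:ℝ) else 0) - (if u = p.2 then 1 else 0)) else 0)
        = (if gridAdj p.1 p.2 then
          ((if u = p.1 then (1:ℝ) else 0) - (if u = p.2 then 1 else 0)) *
          (if gridAdjDir k p.1 p.2 ∧ min (p.1 k : ℕ) (p.2 k : ℕ) = (h : ℕ) then (1:ℝ) else 0) else 0) := by
      intro p; split_ifs <;> ring
    simp only [hcomm]
    exact cross u k h
end

section
/- The rank of the constraint matrix 𝒮^{(n_1,...,n_m)} equals 2 Σ_{i=1}^m (n_i ∏_{j≠i}(n_j+1)) − ∏_{i=1}^m (n_i+1) − Σ_{i=1}^m n_i + 1. -/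
/-- Unit squares of the grid: a pair of directions `i < j` together with a base vertex `u`
having room to move by `e_i` and `e_j`. -/
abbrev SquareIdx (m : ℕ) (n : Fin m → ℕ) :=
  {q : (Fin m × Fin m) × GridV m n //
    q.1.1 < q.1.2 ∧ (q.2 q.1.1 : ℕ) < n q.1.1 ∧ (q.2 q.1.2 : ℕ) < n q.1.2}

/-- Move one step in direction `i` (cyclic `Fin` increment; used only where `u i < n i`). -/
def bump {m : ℕ} {n : Fin m → ℕ} (u : GridV m n) (i : Fin m) : GridV m n :=
  Function.update u i (u i + 1)

/-- The constraint matrix `𝒮^{(n₁,…,n_m)}`: for every unit square and each of its four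
corners `a` (with `b, d` the adjacent corners and `c` the opposite corner), a row with
entries `+1, +1, −1, −1` in the columns `(a,b), (b,c), (a,d), (d,c)`; these are exactly the
commutation relations (3.1). -/
def consMatrix (m : ℕ) (n : Fin m → ℕ) :
    Matrix (SquareIdx m n × Fin 4) (DirEdge m n) ℝ :=
  fun r e =>
    let i := r.1.1.1.1
    let j := r.1.1.1.2
    let u := r.1.1.2
    let c : Fin 4 → GridV m n := ![u, bump u i, bump (bump u i) j, bump u j]
    let s := r.2
    (if e.1 = (c s, c (s + 1)) then (1 : ℝ) else 0) +
      (if e.1 = (c (s + 1), c (s + 2)) then 1 else 0) -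
      (if e.1 = (c s, c (s + 3)) then 1 else 0) -
      (if e.1 = (c (s + 3), c (s + 2)) then 1 else 0)

namespace ConsRank

open Finset

variable {m : ℕ} {n : Fin m → ℕ}

/-! ### bump lemmas -/

lemma bump_ne (u : GridV m n) {i j : Fin m} (h : j ≠ i) : bump u i j = u j :=
  Function.update_of_ne h _ _

lemma bump_self (u : GridV m n) {i : Fin m} (h : (u i : ℕ) < n i) :
    (bump u i i : ℕ) = (u i : ℕ) + 1 := by
  simp only [bump, Function.update_self]
  rw [Fin.val_add_one_of_lt]
  rw [Fin.lt_def, Fin.val_last]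
  exact h

lemma gridAdjDir_bump (u : GridV m n) {i : Fin m} (h : (u i : ℕ) < n i) :
    gridAdjDir i u (bump u i) :=
  ⟨fun l hl => (bump_ne u hl).symm, Or.inl (by rw [bump_self u h])⟩

lemma gridAdjDir_bump' (u : GridV m n) {i : Fin m} (h : (u i : ℕ) < n i) :
    gridAdjDir i (bump u i) u :=
  ⟨fun l hl => bump_ne u hl, Or.inr (by rw [bump_self u h])⟩

lemma bump_comm (u : GridV m n) {i j : Fin m} (hij : i ≠ j) :
    bump (bump u i) j = bump (bump u j) i := by
  unfold bump
  rw [Function.update_of_ne hij.symm, Function.update_of_ne hij, Function.update_comm hij]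

lemma eq_bump {u v : GridV m n} {k : Fin m} (h1 : ∀ l, l ≠ k → u l = v l)
    (h2 : (u k : ℕ) + 1 = (v k : ℕ)) : ∃ h : (u k : ℕ) < n k, v = bump u k := by
  have hk : (u k : ℕ) < n k := by have := (v k).isLt; omega
  refine ⟨hk, funext fun l => ?_⟩
  by_cases hl : l = k
  · subst hl
    apply Fin.val_injective
    rw [bump_self u hk]
    omega
  · rw [bump_ne u hl]
    exact (h1 l hl).symm

lemma gridAdjDir_unique {u v : GridV m n} {k k' : Fin m}
    (h : gridAdjDir k u v) (h' : gridAdjDir k' u v) : k = k' := by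
  by_contra hkk
  have e1 : u k' = v k' := h.1 k' (Ne.symm hkk)
  have e2 := h'.2
  have e3 : (u k' : ℕ) = (v k' : ℕ) := by rw [e1]
  omega

/-! ### edges -/

def fwdE (u : GridV m n) (i : Fin m) (h : (u i : ℕ) < n i) : DirEdge m n :=
  ⟨(u, bump u i), ⟨i, gridAdjDir_bump u h⟩⟩

def bwdE (u : GridV m n) (i : Fin m) (h : (u i : ℕ) < n i) : DirEdge m n :=
  ⟨(bump u i, u), ⟨i, gridAdjDir_bump' u h⟩⟩

noncomputable def edgeDir (e : DirEdge m n) : Fin m := e.2.choose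

lemma edgeDir_adj (e : DirEdge m n) : gridAdjDir (edgeDir e) e.1.1 e.1.2 := e.2.choose_spec

lemma edgeDir_fwd (u : GridV m n) {i : Fin m} (h : (u i : ℕ) < n i) :
    edgeDir (fwdE u i h) = i :=
  gridAdjDir_unique (edgeDir_adj _) (gridAdjDir_bump u h)

lemma edgeDir_bwd (u : GridV m n) {i : Fin m} (h : (u i : ℕ) < n i) :
    edgeDir (bwdE u i h) = i :=
  gridAdjDir_unique (edgeDir_adj _) (gridAdjDir_bump' u h)

noncomputable def edgeLev (e : DirEdge m n) : ℕ :=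
  min (e.1.1 (edgeDir e) : ℕ) (e.1.2 (edgeDir e) : ℕ)

lemma edgeLev_lt (e : DirEdge m n) : edgeLev e < n (edgeDir e) := by
  have h := (edgeDir_adj e).2
  have h1 := (e.1.1 (edgeDir e)).isLt
  have h2 := (e.1.2 (edgeDir e)).isLt
  unfold edgeLev
  omega

lemma edge_cases (e : DirEdge m n) :
    (∃ (u : GridV m n) (i : Fin m) (h : (u i : ℕ) < n i), e = fwdE u i h) ∨
    (∃ (u : GridV m n) (i : Fin m) (h : (u i : ℕ) < n i), e = bwdE u i h) := by
  obtain ⟨⟨u, v⟩, hadj⟩ := e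
  have hk : gridAdjDir (edgeDir ⟨(u, v), hadj⟩) u v := edgeDir_adj ⟨(u, v), hadj⟩
  rcases hk.2 with h | h
  · left
    obtain ⟨hlt, hveq⟩ := eq_bump hk.1 h
    exact ⟨u, _, hlt, Subtype.ext (Prod.ext rfl hveq)⟩
  · right
    obtain ⟨hlt, hueq⟩ := eq_bump (fun l hl => (hk.1 l hl).symm) h
    exact ⟨v, _, hlt, Subtype.ext (Prod.ext hueq rfl)⟩

/-! ### fval, sig, del -/

open Classical in
noncomputable def fval (x : DirEdge m n → ℝ) (p : GridV m n × GridV m n) : ℝ :=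
  if h : gridAdj p.1 p.2 then x ⟨p, h⟩ else 0

lemma fval_fwd (x : DirEdge m n → ℝ) (u : GridV m n) {i : Fin m} (h : (u i : ℕ) < n i) :
    fval x (u, bump u i) = x (fwdE u i h) :=
  dif_pos ⟨i, gridAdjDir_bump u h⟩

lemma fval_bwd (x : DirEdge m n → ℝ) (u : GridV m n) {i : Fin m} (h : (u i : ℕ) < n i) :
    fval x (bump u i, u) = x (bwdE u i h) :=
  dif_pos ⟨i, gridAdjDir_bump' u h⟩

lemma fval_sub (x y : DirEdge m n → ℝ) (p : GridV m n × GridV m n) :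
    fval (x - y) p = fval x p - fval y p := by
  unfold fval
  split
  · rfl
  · ring

noncomputable def sig (x : DirEdge m n → ℝ) (i : Fin m) (u : GridV m n) : ℝ :=
  fval x (u, bump u i) + fval x (bump u i, u)

noncomputable def del (x : DirEdge m n → ℝ) (i : Fin m) (u : GridV m n) : ℝ :=
  fval x (u, bump u i) - fval x (bump u i, u)

lemma sig_sub (x y : DirEdge m n → ℝ) (i : Fin m) (u : GridV m n) :
    sig (x - y) i u = sig x i u - sig y i u := by
  unfold sig; rw [fval_sub, fval_sub]; ring

lemma del_sub (x y : DirEdge m n → ℝ) (i : Fin m) (u : GridV m n) :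
    del (x - y) i u = del x i u - del y i u := by
  unfold del; rw [fval_sub, fval_sub]; ring

/-! ### row computation -/

def corner (q : SquareIdx m n) : Fin 4 → GridV m n :=
  ![q.1.2, bump q.1.2 q.1.1.1, bump (bump q.1.2 q.1.1.1) q.1.1.2, bump q.1.2 q.1.1.2]

lemma sum_ite_fst (x : DirEdge m n → ℝ) (P : GridV m n × GridV m n) :
    (∑ e : DirEdge m n, (if e.1 = P then (1 : ℝ) else 0) * x e) = fval x P := by
  unfold fval
  split_ifs with h
  · rw [Finset.sum_eq_single (⟨P, h⟩ : DirEdge m n)]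
    · rw [if_pos rfl, one_mul]
    · intro b _ hb
      rw [if_neg, zero_mul]
      intro hb1
      exact hb (Subtype.ext hb1)
    · intro hmem
      exact absurd (Finset.mem_univ _) hmem
  · apply Finset.sum_eq_zero
    intro e _
    rw [if_neg, zero_mul]
    intro he
    apply h
    rw [← he]
    exact e.2

lemma mulVec_row (x : DirEdge m n → ℝ) (q : SquareIdx m n) (s : Fin 4) :
    (consMatrix m n).mulVec x (q, s) =
      fval x (corner q s, corner q (s + 1)) + fval x (corner q (s + 1), corner q (s + 2))
        - fval x (corner q s, corner q (s + 3)) - fval x (corner q (s + 3), corner q (s + 2)) := by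
  simp only [Matrix.mulVec, dotProduct, consMatrix, corner]
  simp only [sub_mul, add_mul]
  rw [Finset.sum_sub_distrib, Finset.sum_sub_distrib, Finset.sum_add_distrib,
    sum_ite_fst, sum_ite_fst, sum_ite_fst, sum_ite_fst]

lemma ker_rel {x : DirEdge m n → ℝ} (hx : (consMatrix m n).mulVecLin x = 0)
    {i j : Fin m} (hij : i < j) (u : GridV m n) (hi : (u i : ℕ) < n i) (hj : (u j : ℕ) < n j) :
    sig x i (bump u j) = sig x i u ∧ sig x j (bump u i) = sig x j u ∧
      del x i u + del x j (bump u i) = del x j u + del x i (bump u j) := by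
  have hrow : ∀ s : Fin 4, (consMatrix m n).mulVec x (⟨((i, j), u), hij, hi, hj⟩, s) = 0 := by
    intro s
    have h0 := congrFun hx (⟨((i, j), u), hij, hi, hj⟩, s)
    simpa only [Matrix.mulVecLin_apply, Pi.zero_apply] using h0
  have e0 := hrow 0
  have e1 := hrow 1
  have e2 := hrow 2
  have e3 := hrow 3
  rw [mulVec_row] at e0 e1 e2 e3
  simp only [show ((0 : Fin 4) + 1) = 1 from rfl, show ((0 : Fin 4) + 2) = 2 from rfl,
    show ((0 : Fin 4) + 3) = 3 from rfl, show ((1 : Fin 4) + 1) = 2 from rfl,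
    show ((1 : Fin 4) + 2) = 3 from rfl, show ((1 : Fin 4) + 3) = 0 from rfl,
    show ((2 : Fin 4) + 1) = 3 from rfl, show ((2 : Fin 4) + 2) = 0 from rfl,
    show ((2 : Fin 4) + 3) = 1 from rfl, show ((3 : Fin 4) + 1) = 0 from rfl,
    show ((3 : Fin 4) + 2) = 1 from rfl, show ((3 : Fin 4) + 3) = 2 from rfl] at e0 e1 e2 e3
  have c0 : corner (⟨((i, j), u), hij, hi, hj⟩ : SquareIdx m n) 0 = u := rfl
  have c1 : corner (⟨((i, j), u), hij, hi, hj⟩ : SquareIdx m n) 1 = bump u i := rfl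
  have c2 : corner (⟨((i, j), u), hij, hi, hj⟩ : SquareIdx m n) 2 = bump (bump u i) j := rfl
  have c3 : corner (⟨((i, j), u), hij, hi, hj⟩ : SquareIdx m n) 3 = bump u j := rfl
  rw [c0, c1, c2, c3] at e0 e1 e2 e3
  rw [bump_comm u (ne_of_lt hij)] at e0 e1 e2 e3
  unfold sig del
  rw [bump_comm u (ne_of_lt hij)]
  refine ⟨by linarith, by linarith, by linarith⟩

lemma sig_step {x : DirEdge m n → ℝ} (hx : (consMatrix m n).mulVecLin x = 0)
    {i j : Fin m} (hij : i ≠ j) (u : GridV m n) (hi : (u i : ℕ) < n i) (hj : (u j : ℕ) < n j) :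
    sig x i (bump u j) = sig x i u := by
  rcases lt_or_gt_of_ne hij with h | h
  · exact (ker_rel hx h u hi hj).1
  · exact (ker_rel hx h u hj hi).2.1

lemma del_rel {x : DirEdge m n → ℝ} (hx : (consMatrix m n).mulVecLin x = 0)
    {i j : Fin m} (hij : i < j) (u : GridV m n) (hi : (u i : ℕ) < n i) (hj : (u j : ℕ) < n j) :
    del x i u + del x j (bump u i) = del x j u + del x i (bump u j) :=
  (ker_rel hx hij u hi hj).2.2

/-! ### base points, staircases -/

def baseV (i : Fin m) (t : ℕ) : GridV m n :=
  fun j => ⟨if j = i then min t (n j) else 0, by split <;> omega⟩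

lemma baseV_self {i : Fin m} {t : ℕ} (h : t ≤ n i) : ((baseV i t : GridV m n) i : ℕ) = t := by
  show (if i = i then min t (n i) else 0) = t
  rw [if_pos rfl]
  omega

lemma baseV_ne {i j : Fin m} (h : j ≠ i) (t : ℕ) : ((baseV i t : GridV m n) j : ℕ) = 0 := by
  show (if j = i then min t (n j) else 0) = 0
  rw [if_neg h]

lemma eq_base_of_zero {u : GridV m n} {i : Fin m}
    (h0 : ∀ j, j ≠ i → (u j : ℕ) = 0) : u = baseV i (u i) := by
  funext j
  by_cases hji : j = i
  · subst hji
    apply Fin.val_injective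
    rw [baseV_self (by have := (u j).isLt; omega)]
  · apply Fin.val_injective
    rw [baseV_ne hji, h0 j hji]

/-- un-bump: representation of a vertex with a positive coordinate. -/
lemma exists_unbump (u : GridV m n) {j : Fin m} (hj0 : (u j : ℕ) ≠ 0) :
    ∃ u' : GridV m n, (u' j : ℕ) < n j ∧ (u' j : ℕ) = (u j : ℕ) - 1 ∧
      (∀ l, l ≠ j → u' l = u l) ∧ u = bump u' j := by
  have hlt : (u j : ℕ) - 1 < n j + 1 := by have := (u j).isLt; omega
  set u' : GridV m n := Function.update u j ⟨(u j : ℕ) - 1, hlt⟩ with hu'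
  have hj : (u' j : ℕ) = (u j : ℕ) - 1 := by rw [hu', Function.update_self]
  have hl : ∀ l, l ≠ j → u' l = u l := fun l hl => Function.update_of_ne hl _ _
  have hltn : (u' j : ℕ) < n j := by have := (u j).isLt; omega
  refine ⟨u', hltn, hj, hl, funext fun l => ?_⟩
  by_cases hlj : l = j
  · subst hlj
    apply Fin.val_injective
    rw [bump_self u' hltn, hj]
    omega
  · rw [bump_ne u' hlj, hl l hlj]

lemma sig_eq_base {x : DirEdge m n → ℝ} (hx : (consMatrix m n).mulVecLin x = 0) (i : Fin m) :
    ∀ (N : ℕ) (u : GridV m n), (∑ j ∈ univ.erase i, (u j : ℕ)) ≤ N → (u i : ℕ) < n i →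
      sig x i u = sig x i (baseV i (u i)) := by
  intro N
  induction N with
  | zero =>
    intro u hsum hi
    have hz : ∀ j, j ≠ i → (u j : ℕ) = 0 := by
      intro j hj
      exact Finset.sum_eq_zero_iff.mp (Nat.le_zero.mp hsum) j
        (Finset.mem_erase.mpr ⟨hj, Finset.mem_univ _⟩)
    rw [← eq_base_of_zero hz]
  | succ N ih =>
    intro u hsum hi
    by_cases h0 : ∀ j, j ≠ i → (u j : ℕ) = 0
    · rw [← eq_base_of_zero h0]
    · push_neg at h0
      obtain ⟨j, hji, hj0⟩ := h0
      obtain ⟨u', hlt, hj1, hl, hbu⟩ := exists_unbump u hj0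
      have hi' : (u' i : ℕ) < n i := by rw [hl i (Ne.symm hji)]; exact hi
      have hsum' : (∑ l ∈ univ.erase i, (u' l : ℕ)) ≤ N := by
        have hlt2 : (∑ l ∈ univ.erase i, (u' l : ℕ)) < ∑ l ∈ univ.erase i, (u l : ℕ) := by
          apply Finset.sum_lt_sum
          · intro l hl2
            by_cases hlj : l = j
            · subst hlj; omega
            · rw [hl l hlj]
          · exact ⟨j, Finset.mem_erase.mpr ⟨hji, Finset.mem_univ _⟩, by omega⟩
        omega
      calc sig x i u = sig x i (bump u' j) := by rw [← hbu]
        _ = sig x i u' := sig_step hx (Ne.symm hji) u' hi' hlt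
        _ = sig x i (baseV i (u' i)) := ih u' hsum' hi'
        _ = sig x i (baseV i (u i)) := by rw [hl i (Ne.symm hji)]

lemma del_zero_of {x : DirEdge m n → ℝ} (hx : (consMatrix m n).mulVecLin x = 0)
    (hbase : ∀ (i : Fin m) (u : GridV m n), (u i : ℕ) < n i →
      (∀ j, i < j → (u j : ℕ) = 0) → del x i u = 0) :
    ∀ (N : ℕ) (i : Fin m) (u : GridV m n),
      (∑ l ∈ univ.filter (fun l => i < l), (u l : ℕ)) ≤ N → (u i : ℕ) < n i →
      del x i u = 0 := by
  intro N
  induction N with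
  | zero =>
    intro i u hsum hi
    apply hbase i u hi
    intro j hij
    exact Finset.sum_eq_zero_iff.mp (Nat.le_zero.mp hsum) j
      (Finset.mem_filter.mpr ⟨Finset.mem_univ _, hij⟩)
  | succ N ih =>
    intro i u hsum hi
    by_cases h0 : ∀ j, i < j → (u j : ℕ) = 0
    · exact hbase i u hi h0
    · push_neg at h0
      obtain ⟨j, hij, hj0⟩ := h0
      obtain ⟨u', hlt, hj1, hl, hbu⟩ := exists_unbump u hj0
      have hine : i ≠ j := ne_of_lt hij
      have hi' : (u' i : ℕ) < n i := by rw [hl i hine]; exact hi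
      have hSi : (∑ l ∈ univ.filter (fun l => i < l), (u' l : ℕ)) ≤ N := by
        have hlt2 : (∑ l ∈ univ.filter (fun l => i < l), (u' l : ℕ))
            < ∑ l ∈ univ.filter (fun l => i < l), (u l : ℕ) := by
          apply Finset.sum_lt_sum
          · intro l hl2
            by_cases hlj : l = j
            · subst hlj; omega
            · rw [hl l hlj]
          · exact ⟨j, Finset.mem_filter.mpr ⟨Finset.mem_univ _, hij⟩, by omega⟩
        omega
      have hSj0 : (∑ l ∈ univ.filter (fun l => j < l), (u l : ℕ)) + (u j : ℕ)
          ≤ ∑ l ∈ univ.filter (fun l => i < l), (u l : ℕ) := by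
        have hsub : insert j (univ.filter (fun l => j < l)) ⊆ univ.filter (fun l => i < l) := by
          intro l hl2
          rcases Finset.mem_insert.mp hl2 with h | h
          · subst h; exact Finset.mem_filter.mpr ⟨Finset.mem_univ _, hij⟩
          · exact Finset.mem_filter.mpr ⟨Finset.mem_univ _,
              lt_trans hij (Finset.mem_filter.mp h).2⟩
        have hnotmem : j ∉ univ.filter (fun l => j < l) := by
          simp
        have h6 := Finset.sum_le_sum_of_subset (f := fun l => (u l : ℕ)) hsub
        rw [Finset.sum_insert hnotmem] at h6
        have h7 : (u j : ℕ) + ∑ l ∈ univ.filter (fun l => j < l), (u l : ℕ)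
            ≤ ∑ l ∈ univ.filter (fun l => i < l), (u l : ℕ) := by simpa using h6
        omega
      have hSj : (∑ l ∈ univ.filter (fun l => j < l), (u' l : ℕ)) ≤ N := by
        have heq : (∑ l ∈ univ.filter (fun l => j < l), (u' l : ℕ))
            = ∑ l ∈ univ.filter (fun l => j < l), (u l : ℕ) := by
          apply Finset.sum_congr rfl
          intro l hl2
          rw [hl l (by have := (Finset.mem_filter.mp hl2).2; omega)]
        omega
      have hSj' : (∑ l ∈ univ.filter (fun l => j < l), ((bump u' i) l : ℕ)) ≤ N := by
        have heq : (∑ l ∈ univ.filter (fun l => j < l), ((bump u' i) l : ℕ))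
            = ∑ l ∈ univ.filter (fun l => j < l), (u' l : ℕ) := by
          apply Finset.sum_congr rfl
          intro l hl2
          rw [bump_ne u' (by have := (Finset.mem_filter.mp hl2).2; omega : l ≠ i)]
        rw [heq]
        exact hSj
      have hbj : ((bump u' i) j : ℕ) < n j := by rw [bump_ne u' (Ne.symm hine)]; exact hlt
      have h1 : del x i u' = 0 := ih i u' hSi hi'
      have h2 : del x j u' = 0 := ih j u' hSj hlt
      have h3 : del x j (bump u' i) = 0 := ih j (bump u' i) hSj' hbj
      have hrel := del_rel hx hij u' hi' hlt
      rw [hbu]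
      linarith

/-! ### staircase integral -/

def stairV (u : GridV m n) (i : Fin m) (t : ℕ) : GridV m n :=
  fun j => ⟨if j < i then (u j : ℕ) else if j = i then min t (n j) else 0,
    by have := (u j).isLt; split_ifs <;> omega⟩

lemma stairV_congr {u v : GridV m n} (i : Fin m) (t : ℕ)
    (h : ∀ j, j < i → u j = v j) : stairV u i t = stairV v i t := by
  funext j
  apply Fin.val_injective
  show (if j < i then (u j : ℕ) else if j = i then min t (n j) else 0)
      = (if j < i then (v j : ℕ) else if j = i then min t (n j) else 0)
  split_ifs with h1 h2
  · rw [h j h1]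
  · rfl
  · rfl

lemma stairV_self {u : GridV m n} {i : Fin m} (htail : ∀ j, i < j → (u j : ℕ) = 0) :
    stairV u i (u i : ℕ) = u := by
  funext j
  apply Fin.val_injective
  show (if j < i then (u j : ℕ) else if j = i then min ((u i : ℕ)) (n j) else 0) = (u j : ℕ)
  split_ifs with h1 h2
  · rfl
  · subst h2
    have := (u j).isLt
    omega
  · have hij : i < j := by
      rcases lt_trichotomy j i with h | h | h
      · exact absurd h h1
      · exact absurd h h2
      · exact h
    rw [htail j hij]

noncomputable def Aint (x : DirEdge m n → ℝ) (u : GridV m n) : ℝ :=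
  ∑ i, ∑ t ∈ Finset.range (u i : ℕ), del x i (stairV u i t)

lemma Aint_bump (x : DirEdge m n → ℝ) (u : GridV m n) {i : Fin m} (hi : (u i : ℕ) < n i)
    (htail : ∀ j, i < j → (u j : ℕ) = 0) :
    Aint x (bump u i) = Aint x u + del x i u := by
  unfold Aint
  have step : ∀ k : Fin m,
      (∑ t ∈ Finset.range ((bump u i) k : ℕ), del x k (stairV (bump u i) k t))
        = (∑ t ∈ Finset.range (u k : ℕ), del x k (stairV u k t))
          + (if k = i then del x i u else 0) := by
    intro k
    rcases lt_trichotomy k i with hk | hk | hk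
    · rw [if_neg (ne_of_lt hk), add_zero, bump_ne u (ne_of_lt hk)]
      apply Finset.sum_congr rfl
      intro t _
      rw [stairV_congr k t (fun j hj => bump_ne u (by omega : j ≠ i))]
    · subst hk
      rw [if_pos rfl, bump_self u hi, Finset.sum_range_succ]
      have hstair : ∀ t : ℕ, stairV (bump u k) k t = stairV u k t :=
        fun t => stairV_congr k t (fun j hj => bump_ne u (by omega : j ≠ k))
      congr 1
      · exact Finset.sum_congr rfl fun t _ => by rw [hstair t]
      · rw [hstair, stairV_self htail]
    · rw [if_neg (by omega : ¬ k = i), add_zero, bump_ne u (by omega : k ≠ i), htail k hk]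
      simp
  rw [Finset.sum_congr rfl (fun k _ => step k), Finset.sum_add_distrib]
  simp

/-! ### the parametrization Phi -/

noncomputable def Phi (α : GridV m n → ℝ) (γ : ∀ i : Fin m, Fin (n i) → ℝ)
    (e : DirEdge m n) : ℝ :=
  α e.1.2 - α e.1.1 + γ (edgeDir e) ⟨edgeLev e, edgeLev_lt e⟩

lemma gamma_eval (γ : ∀ i : Fin m, Fin (n i) → ℝ) (e : DirEdge m n) {i : Fin m}
    (hd : edgeDir e = i) (t : Fin (n i)) (ht : (t : ℕ) = edgeLev e) :
    γ (edgeDir e) ⟨edgeLev e, edgeLev_lt e⟩ = γ i t := by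
  subst hd
  exact congrArg _ (Fin.val_injective ht.symm)

lemma edgeLev_fwd (u : GridV m n) {i : Fin m} (h : (u i : ℕ) < n i) :
    edgeLev (fwdE u i h) = (u i : ℕ) := by
  unfold edgeLev
  rw [edgeDir_fwd u h]
  show min ((u i : ℕ)) ((bump u i i : ℕ)) = (u i : ℕ)
  rw [bump_self u h]
  omega

lemma edgeLev_bwd (u : GridV m n) {i : Fin m} (h : (u i : ℕ) < n i) :
    edgeLev (bwdE u i h) = (u i : ℕ) := by
  unfold edgeLev
  rw [edgeDir_bwd u h]
  show min ((bump u i i : ℕ)) ((u i : ℕ)) = (u i : ℕ)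
  rw [bump_self u h]
  omega

lemma Phi_fwd (α : GridV m n → ℝ) (γ : ∀ i : Fin m, Fin (n i) → ℝ) (u : GridV m n)
    {i : Fin m} (h : (u i : ℕ) < n i) (t : Fin (n i)) (ht : (t : ℕ) = (u i : ℕ)) :
    Phi α γ (fwdE u i h) = α (bump u i) - α u + γ i t := by
  unfold Phi
  rw [gamma_eval γ _ (edgeDir_fwd u h) t (by rw [ht, edgeLev_fwd u h])]
  rfl

lemma Phi_bwd (α : GridV m n → ℝ) (γ : ∀ i : Fin m, Fin (n i) → ℝ) (u : GridV m n)
    {i : Fin m} (h : (u i : ℕ) < n i) (t : Fin (n i)) (ht : (t : ℕ) = (u i : ℕ)) :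
    Phi α γ (bwdE u i h) = α u - α (bump u i) + γ i t := by
  unfold Phi
  rw [gamma_eval γ _ (edgeDir_bwd u h) t (by rw [ht, edgeLev_bwd u h])]
  rfl

lemma sig_Phi (α : GridV m n → ℝ) (γ : ∀ i : Fin m, Fin (n i) → ℝ) (u : GridV m n)
    {i : Fin m} (h : (u i : ℕ) < n i) (t : Fin (n i)) (ht : (t : ℕ) = (u i : ℕ)) :
    sig (Phi α γ) i u = 2 * γ i t := by
  unfold sig
  rw [fval_fwd _ u h, fval_bwd _ u h, Phi_fwd α γ u h t ht, Phi_bwd α γ u h t ht]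
  ring

lemma del_Phi (α : GridV m n → ℝ) (γ : ∀ i : Fin m, Fin (n i) → ℝ) (u : GridV m n)
    {i : Fin m} (h : (u i : ℕ) < n i) (t : Fin (n i)) (ht : (t : ℕ) = (u i : ℕ)) :
    del (Phi α γ) i u = 2 * (α (bump u i) - α u) := by
  unfold del
  rw [fval_fwd _ u h, fval_bwd _ u h, Phi_fwd α γ u h t ht, Phi_bwd α γ u h t ht]
  ring

noncomputable def PhiL :
    ((GridV m n → ℝ) × (∀ i : Fin m, Fin (n i) → ℝ)) →ₗ[ℝ] (DirEdge m n → ℝ) where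
  toFun p := Phi p.1 p.2
  map_add' p q := by
    funext e
    simp only [Phi, Prod.fst_add, Prod.snd_add, Pi.add_apply]
    ring
  map_smul' c p := by
    funext e
    simp only [Phi, Prod.smul_fst, Prod.smul_snd, Pi.smul_apply, smul_eq_mul,
      RingHom.id_apply]
    ring

/-! ### Phi lands in the kernel -/

lemma Phi_mem_ker (α : GridV m n → ℝ) (γ : ∀ i : Fin m, Fin (n i) → ℝ) :
    (consMatrix m n).mulVecLin (Phi α γ) = 0 := by
  funext r
  obtain ⟨⟨⟨⟨i, j⟩, u⟩, hij, hi, hj⟩, s⟩ := r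
  rw [Matrix.mulVecLin_apply, Pi.zero_apply, mulVec_row]
  have hne : i ≠ j := ne_of_lt hij
  have hcomm : bump (bump u i) j = bump (bump u j) i := bump_comm u hne
  have hbi : ((bump u i) j : ℕ) < n j := by rw [bump_ne u (Ne.symm hne)]; exact hj
  have hbj : ((bump u j) i : ℕ) < n i := by rw [bump_ne u hne]; exact hi
  have hti : ((⟨(u i : ℕ), hi⟩ : Fin (n i)) : ℕ) = ((bump u j) i : ℕ) := by
    rw [bump_ne u hne]
  have htj : ((⟨(u j : ℕ), hj⟩ : Fin (n j)) : ℕ) = ((bump u i) j : ℕ) := by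
    rw [bump_ne u (Ne.symm hne)]
  have h1 : fval (Phi α γ) (u, bump u i)
      = α (bump u i) - α u + γ i ⟨(u i : ℕ), hi⟩ := by
    rw [fval_fwd _ u hi, Phi_fwd α γ u hi ⟨(u i : ℕ), hi⟩ rfl]
  have h2 : fval (Phi α γ) (bump u i, u)
      = α u - α (bump u i) + γ i ⟨(u i : ℕ), hi⟩ := by
    rw [fval_bwd _ u hi, Phi_bwd α γ u hi ⟨(u i : ℕ), hi⟩ rfl]
  have h3 : fval (Phi α γ) (u, bump u j)
      = α (bump u j) - α u + γ j ⟨(u j : ℕ), hj⟩ := by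
    rw [fval_fwd _ u hj, Phi_fwd α γ u hj ⟨(u j : ℕ), hj⟩ rfl]
  have h4 : fval (Phi α γ) (bump u j, u)
      = α u - α (bump u j) + γ j ⟨(u j : ℕ), hj⟩ := by
    rw [fval_bwd _ u hj, Phi_bwd α γ u hj ⟨(u j : ℕ), hj⟩ rfl]
  have h5 : fval (Phi α γ) (bump u i, bump (bump u i) j)
      = α (bump (bump u i) j) - α (bump u i) + γ j ⟨(u j : ℕ), hj⟩ := by
    rw [fval_fwd _ (bump u i) hbi, Phi_fwd α γ (bump u i) hbi ⟨(u j : ℕ), hj⟩ htj]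
  have h6 : fval (Phi α γ) (bump (bump u i) j, bump u i)
      = α (bump u i) - α (bump (bump u i) j) + γ j ⟨(u j : ℕ), hj⟩ := by
    rw [fval_bwd _ (bump u i) hbi, Phi_bwd α γ (bump u i) hbi ⟨(u j : ℕ), hj⟩ htj]
  have h7 : fval (Phi α γ) (bump u j, bump (bump u i) j)
      = α (bump (bump u i) j) - α (bump u j) + γ i ⟨(u i : ℕ), hi⟩ := by
    rw [hcomm, fval_fwd _ (bump u j) hbj, Phi_fwd α γ (bump u j) hbj ⟨(u i : ℕ), hi⟩ hti,
      ← hcomm]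
  have h8 : fval (Phi α γ) (bump (bump u i) j, bump u j)
      = α (bump u j) - α (bump (bump u i) j) + γ i ⟨(u i : ℕ), hi⟩ := by
    rw [hcomm, fval_bwd _ (bump u j) hbj, Phi_bwd α γ (bump u j) hbj ⟨(u i : ℕ), hi⟩ hti,
      ← hcomm]
  fin_cases s
  · show fval (Phi α γ) (u, bump u i) + fval (Phi α γ) (bump u i, bump (bump u i) j) -
        fval (Phi α γ) (u, bump u j) - fval (Phi α γ) (bump u j, bump (bump u i) j) = 0
    rw [h1, h5, h3, h7]; ring
  · show fval (Phi α γ) (bump u i, bump (bump u i) j) +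
        fval (Phi α γ) (bump (bump u i) j, bump u j) -
        fval (Phi α γ) (bump u i, u) - fval (Phi α γ) (u, bump u j) = 0
    rw [h5, h8, h2, h3]; ring
  · show fval (Phi α γ) (bump (bump u i) j, bump u j) + fval (Phi α γ) (bump u j, u) -
        fval (Phi α γ) (bump (bump u i) j, bump u i) - fval (Phi α γ) (bump u i, u) = 0
    rw [h8, h4, h6, h2]; ring
  · show fval (Phi α γ) (bump u j, u) + fval (Phi α γ) (u, bump u i) -
        fval (Phi α γ) (bump u j, bump (bump u i) j) -
        fval (Phi α γ) (bump (bump u i) j, bump u i) = 0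
    rw [h4, h1, h7, h6]; ring

end ConsRank


namespace ConsRank

variable {m : ℕ} {n : Fin m → ℕ}

open Finset

/-! ### kernel of PhiL -/

def vOne : (GridV m n → ℝ) × (∀ i : Fin m, Fin (n i) → ℝ) := ((fun _ => 1), 0)

lemma vOne_ne_zero : (vOne : (GridV m n → ℝ) × _) ≠ 0 := by
  intro h
  have h1 := congrFun (congrArg Prod.fst h) (fun k => 0)
  simp [vOne] at h1

lemma alpha_const {α : GridV m n → ℝ} (hstep : ∀ (u : GridV m n) (i : Fin m),
    (u i : ℕ) < n i → α (bump u i) = α u) :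
    ∀ (N : ℕ) (u : GridV m n), (∑ j, (u j : ℕ)) ≤ N → α u = α (fun _ => 0) := by
  intro N
  induction N with
  | zero =>
    intro u hsum
    have hz : ∀ j, (u j : ℕ) = 0 := by
      intro j
      have := Finset.sum_eq_zero_iff.mp (Nat.le_zero.mp hsum) j (Finset.mem_univ _)
      exact this
    have : u = (fun _ => 0) := funext fun j => Fin.val_injective (hz j)
    rw [this]
  | succ N ih =>
    intro u hsum
    by_cases h0 : ∀ j, (u j : ℕ) = 0
    · have : u = (fun _ => 0) := funext fun j => Fin.val_injective (h0 j)
      rw [this]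
    · push_neg at h0
      obtain ⟨j, hj0⟩ := h0
      obtain ⟨u', hlt, hj1, hl, hbu⟩ := exists_unbump u hj0
      have hsum' : (∑ l, (u' l : ℕ)) ≤ N := by
        have hlt2 : (∑ l, (u' l : ℕ)) < ∑ l, (u l : ℕ) := by
          apply Finset.sum_lt_sum
          · intro l _
            by_cases hlj : l = j
            · subst hlj; omega
            · rw [hl l hlj]
          · exact ⟨j, Finset.mem_univ _, by omega⟩
        omega
      rw [hbu, hstep u' j hlt]
      exact ih u' hsum'

lemma ker_PhiL :
    LinearMap.ker (PhiL : _ →ₗ[ℝ] (DirEdge m n → ℝ)) = Submodule.span ℝ {vOne} := by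
  apply le_antisymm
  · rintro ⟨α, γ⟩ hp
    have hp' : Phi α γ = 0 := hp
    have hγ : ∀ (i : Fin m) (t : Fin (n i)), γ i t = 0 := by
      intro i t
      have hlt : ((baseV i (t : ℕ) : GridV m n) i : ℕ) < n i := by
        rw [baseV_self (le_of_lt t.isLt)]
        exact t.isLt
      have ht : (t : ℕ) = ((baseV i (t : ℕ) : GridV m n) i : ℕ) :=
        (baseV_self (le_of_lt t.isLt)).symm
      have h1 := congrFun hp' (fwdE (baseV i (t : ℕ)) i hlt)
      have h2 := congrFun hp' (bwdE (baseV i (t : ℕ)) i hlt)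
      rw [Phi_fwd α γ _ hlt t ht, Pi.zero_apply] at h1
      rw [Phi_bwd α γ _ hlt t ht, Pi.zero_apply] at h2
      linarith
    have hstep : ∀ (u : GridV m n) (i : Fin m), (u i : ℕ) < n i → α (bump u i) = α u := by
      intro u i hlt
      have h1 := congrFun hp' (fwdE u i hlt)
      rw [Phi_fwd α γ u hlt ⟨(u i : ℕ), hlt⟩ rfl, Pi.zero_apply, hγ] at h1
      linarith
    apply Submodule.mem_span_singleton.mpr
    refine ⟨α (fun _ => 0), ?_⟩
    have hα : ∀ u, α u = α (fun _ => 0) := fun u => alpha_const hstep _ u le_rfl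
    apply Prod.ext
    · funext u
      show α (fun _ => 0) * 1 = α u
      rw [hα u, mul_one]
    · funext i t
      show α (fun _ => 0) * 0 = γ i t
      rw [hγ, mul_zero]
  · rw [Submodule.span_le, Set.singleton_subset_iff]
    show Phi (fun _ => 1) 0 = 0
    funext e
    simp [Phi]

/-! ### range of PhiL equals kernel of the matrix -/

lemma range_eq_ker :
    LinearMap.range (PhiL : _ →ₗ[ℝ] (DirEdge m n → ℝ))
      = LinearMap.ker (consMatrix m n).mulVecLin := by
  apply le_antisymm
  · rintro x ⟨⟨α, γ⟩, rfl⟩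
    exact LinearMap.mem_ker.mpr (Phi_mem_ker α γ)
  · intro x hx
    rw [LinearMap.mem_ker] at hx
    set γf : ∀ i : Fin m, Fin (n i) → ℝ :=
      fun i t => sig x i (baseV i (t : ℕ)) / 2 with hγf
    set αf : GridV m n → ℝ := fun u => Aint x u / 2 with hαf
    refine ⟨(αf, γf), ?_⟩
    show Phi αf γf = x
    set g : DirEdge m n → ℝ := x - Phi αf γf with hg
    have hPhiKer := Phi_mem_ker αf γf
    have hgker : (consMatrix m n).mulVecLin g = 0 := by
      rw [hg, map_sub, hx, hPhiKer, sub_zero]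
    have hsiggbase : ∀ (i : Fin m) (u : GridV m n), (u i : ℕ) < n i → sig g i u = 0 := by
      intro i u hi
      have h1 : sig g i u = sig x i u - sig (Phi αf γf) i u := by
        rw [hg, sig_sub]
      have h2 := sig_eq_base hx i _ u le_rfl hi
      have hb : ((baseV i ((u i : ℕ)) : GridV m n) i : ℕ) = (u i : ℕ) :=
        baseV_self (by have := (u i).isLt; omega)
      have hblt : ((baseV i ((u i : ℕ)) : GridV m n) i : ℕ) < n i := by rw [hb]; exact hi
      have h3 : sig (Phi αf γf) i u = 2 * γf i ⟨(u i : ℕ), hi⟩ :=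
        sig_Phi αf γf u hi _ rfl
      have h4 : γf i ⟨(u i : ℕ), hi⟩ = sig x i (baseV i ((u i : ℕ))) / 2 := rfl
      rw [h1, h2, h3, h4]
      ring
    have hdelgbase : ∀ (i : Fin m) (u : GridV m n), (u i : ℕ) < n i →
        (∀ j, i < j → (u j : ℕ) = 0) → del g i u = 0 := by
      intro i u hi htail
      have h1 : del g i u = del x i u - del (Phi αf γf) i u := by
        rw [hg, del_sub]
      have h2 : del (Phi αf γf) i u = 2 * (αf (bump u i) - αf u) :=
        del_Phi αf γf u hi ⟨(u i : ℕ), hi⟩ rfl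
      have h3 : Aint x (bump u i) = Aint x u + del x i u := Aint_bump x u hi htail
      have h4 : αf (bump u i) = Aint x (bump u i) / 2 := rfl
      have h5 : αf u = Aint x u / 2 := rfl
      rw [h1, h2, h4, h5, h3]
      ring
    have hdelg : ∀ (i : Fin m) (u : GridV m n), (u i : ℕ) < n i → del g i u = 0 :=
      fun i u hi => del_zero_of hgker hdelgbase _ i u le_rfl hi
    have hgz : ∀ e, g e = 0 := by
      intro e
      rcases edge_cases e with ⟨u, i, h, rfl⟩ | ⟨u, i, h, rfl⟩
      · have hs := hsiggbase i u h
        have hd := hdelg i u h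
        rw [sig, fval_fwd _ u h, fval_bwd _ u h] at hs
        rw [del, fval_fwd _ u h, fval_bwd _ u h] at hd
        linarith
      · have hs := hsiggbase i u h
        have hd := hdelg i u h
        rw [sig, fval_fwd _ u h, fval_bwd _ u h] at hs
        rw [del, fval_fwd _ u h, fval_bwd _ u h] at hd
        linarith
    funext e
    have := hgz e
    rw [hg] at this
    simp only [Pi.sub_apply] at this
    linarith

/-! ### counting directed edges -/

lemma sig_mk_eq {i i' : Fin m} (hii : i = i') (b : Bool) (u : GridV m n)
    (h : (u i : ℕ) < n i) (h' : (u i' : ℕ) < n i') :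
    (⟨i, b, ⟨u, h⟩⟩ : Σ k : Fin m, Bool × {u : GridV m n // (u k : ℕ) < n k})
      = ⟨i', b, ⟨u, h'⟩⟩ := by
  subst hii
  rfl

noncomputable def edgeToSig (e : DirEdge m n) :
    Σ k : Fin m, Bool × {u : GridV m n // (u k : ℕ) < n k} :=
  if hc : (e.1.1 (edgeDir e) : ℕ) < (e.1.2 (edgeDir e) : ℕ) then
    ⟨edgeDir e, true, ⟨e.1.1, by
      have h := (edgeDir_adj e).2
      have h2 := (e.1.2 (edgeDir e)).isLt
      omega⟩⟩
  else
    ⟨edgeDir e, false, ⟨e.1.2, by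
      have h := (edgeDir_adj e).2
      have h2 := (e.1.1 (edgeDir e)).isLt
      omega⟩⟩

def sigToEdge (p : Σ k : Fin m, Bool × {u : GridV m n // (u k : ℕ) < n k}) : DirEdge m n :=
  if p.2.1 then fwdE p.2.2.1 p.1 p.2.2.2 else bwdE p.2.2.1 p.1 p.2.2.2

lemma edgeToSig_fwd (u : GridV m n) (i : Fin m) (h : (u i : ℕ) < n i) :
    edgeToSig (fwdE u i h) = ⟨i, true, ⟨u, h⟩⟩ := by
  have hd : edgeDir (fwdE u i h) = i := edgeDir_fwd u h
  have hc : ((fwdE u i h).1.1 (edgeDir (fwdE u i h)) : ℕ)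
      < ((fwdE u i h).1.2 (edgeDir (fwdE u i h)) : ℕ) := by
    rw [hd]
    show (u i : ℕ) < (bump u i i : ℕ)
    rw [bump_self u h]
    omega
  have hpf : (u (edgeDir (fwdE u i h)) : ℕ) < n (edgeDir (fwdE u i h)) := by
    rw [hd]; exact h
  unfold edgeToSig
  rw [dif_pos hc]
  exact sig_mk_eq hd true u hpf h

lemma edgeToSig_bwd (u : GridV m n) (i : Fin m) (h : (u i : ℕ) < n i) :
    edgeToSig (bwdE u i h) = ⟨i, false, ⟨u, h⟩⟩ := by
  have hd : edgeDir (bwdE u i h) = i := edgeDir_bwd u h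
  have hc : ¬ (((bwdE u i h).1.1 (edgeDir (bwdE u i h)) : ℕ)
      < ((bwdE u i h).1.2 (edgeDir (bwdE u i h)) : ℕ)) := by
    rw [hd]
    show ¬ ((bump u i i : ℕ) < (u i : ℕ))
    rw [bump_self u h]
    omega
  have hpf : (u (edgeDir (bwdE u i h)) : ℕ) < n (edgeDir (bwdE u i h)) := by
    rw [hd]; exact h
  unfold edgeToSig
  rw [dif_neg hc]
  exact sig_mk_eq hd false u hpf h

noncomputable def edgeEquiv :
    DirEdge m n ≃ Σ k : Fin m, Bool × {u : GridV m n // (u k : ℕ) < n k} where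
  toFun := edgeToSig
  invFun := sigToEdge
  left_inv e := by
    rcases edge_cases e with ⟨u, i, h, rfl⟩ | ⟨u, i, h, rfl⟩
    · rw [edgeToSig_fwd]
      rfl
    · rw [edgeToSig_bwd]
      rfl
  right_inv p := by
    obtain ⟨i, b, u, h⟩ := p
    cases b
    · exact edgeToSig_bwd u i h
    · exact edgeToSig_fwd u i h

def levelEquiv (N : ℕ) : {t : Fin (N + 1) // (t : ℕ) < N} ≃ Fin N where
  toFun t := ⟨(t.1 : ℕ), t.2⟩
  invFun t := ⟨⟨(t : ℕ), by omega⟩, t.isLt⟩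
  left_inv t := rfl
  right_inv t := rfl

noncomputable def sliceEquiv (i : Fin m) :
    {u : GridV m n // (u i : ℕ) < n i}
      ≃ Fin (n i) × (∀ j : {j : Fin m // j ≠ i}, Fin (n j + 1)) :=
  ((Equiv.piSplitAt i (fun k => Fin (n k + 1))).subtypeEquiv
    (fun u => by simp [Equiv.piSplitAt])).trans
    ((Equiv.prodSubtypeFstEquivSubtypeProd).trans
      (Equiv.prodCongrLeft (fun _ => levelEquiv (n i))))

lemma card_slice (i : Fin m) :
    Fintype.card {u : GridV m n // (u i : ℕ) < n i}
      = n i * ∏ j ∈ univ.erase i, (n j + 1) := by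
  rw [Fintype.card_congr (sliceEquiv i), Fintype.card_prod, Fintype.card_fin,
    Fintype.card_pi]
  congr 1
  simp only [Fintype.card_fin]
  exact (Finset.prod_subtype (p := fun j => j ≠ i) (univ.erase i)
    (fun x => by simp) (fun j => n j + 1)).symm

lemma card_dirEdge :
    Fintype.card (DirEdge m n) = ∑ i, 2 * (n i * ∏ j ∈ univ.erase i, (n j + 1)) := by
  rw [Fintype.card_congr (edgeEquiv (m := m) (n := n)), Fintype.card_sigma]
  apply Finset.sum_congr rfl
  intro i _
  rw [Fintype.card_prod, Fintype.card_bool, card_slice i]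

/-! ### dimension count -/

lemma finrank_domain :
    Module.finrank ℝ ((GridV m n → ℝ) × (∀ i : Fin m, Fin (n i) → ℝ))
      = ∏ i, (n i + 1) + ∑ i, n i := by
  rw [Module.finrank_prod, Module.finrank_fintype_fun_eq_card, Module.finrank_pi_fintype]
  congr 1
  · rw [Fintype.card_pi]
    apply Finset.prod_congr rfl
    intro i _
    rw [Fintype.card_fin]
  · apply Finset.sum_congr rfl
    intro i _
    rw [Module.finrank_fintype_fun_eq_card, Fintype.card_fin]

lemma finrank_range_PhiL :
    Module.finrank ℝ (LinearMap.range (PhiL : _ →ₗ[ℝ] (DirEdge m n → ℝ))) + 1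
      = ∏ i, (n i + 1) + ∑ i, n i := by
  have h1 := LinearMap.finrank_range_add_finrank_ker (PhiL : _ →ₗ[ℝ] (DirEdge m n → ℝ))
  rw [ker_PhiL, finrank_span_singleton vOne_ne_zero, finrank_domain] at h1
  exact h1

lemma rank_nullity_matrix :
    (consMatrix m n).rank
      + Module.finrank ℝ (LinearMap.ker (consMatrix m n).mulVecLin)
      = Fintype.card (DirEdge m n) := by
  rw [Matrix.rank]
  rw [LinearMap.finrank_range_add_finrank_ker (consMatrix m n).mulVecLin,
    Module.finrank_fintype_fun_eq_card]

end ConsRank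


/-- **Proposition 3.12.** The rank of the constraint matrix equals
`2 ∑ᵢ nᵢ ∏_{j≠i}(n_j+1) − ∏ᵢ(nᵢ+1) − ∑ᵢ nᵢ + 1`. -/
theorem consMatrix_rank {m : ℕ} (n : Fin m → ℕ) :
    ((consMatrix m n).rank : ℤ) =
      2 * ∑ i, (n i : ℤ) * ∏ j ∈ Finset.univ.erase i, ((n j : ℤ) + 1) -
        ∏ i, ((n i : ℤ) + 1) - ∑ i, (n i : ℤ) + 1 := by
  have h1 := ConsRank.rank_nullity_matrix (m := m) (n := n)
  have h2 : Module.finrank ℝ (LinearMap.ker (consMatrix m n).mulVecLin)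
      = Module.finrank ℝ
        (LinearMap.range (ConsRank.PhiL : _ →ₗ[ℝ] (DirEdge m n → ℝ))) := by
    rw [ConsRank.range_eq_ker]
  have h3 := ConsRank.finrank_range_PhiL (m := m) (n := n)
  have h4 := ConsRank.card_dirEdge (m := m) (n := n)
  have h5 : ((consMatrix m n).rank : ℤ)
      = ((∑ i, 2 * (n i * ∏ j ∈ Finset.univ.erase i, (n j + 1)) : ℕ) : ℤ)
        - ((∏ i, (n i + 1) : ℕ) : ℤ) - ((∑ i, n i : ℕ) : ℤ) + 1 := by
    rw [← h4]
    omega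
  have hsum : ((∑ i, 2 * (n i * ∏ j ∈ Finset.univ.erase i, (n j + 1)) : ℕ) : ℤ)
      = 2 * ∑ i, (n i : ℤ) * ∏ j ∈ Finset.univ.erase i, ((n j : ℤ) + 1) := by
    push_cast
    rw [Finset.mul_sum]
  have hprod : ((∏ i, (n i + 1) : ℕ) : ℤ) = ∏ i, ((n i : ℤ) + 1) := by
    push_cast
    rfl
  have hs2 : ((∑ i, n i : ℕ) : ℤ) = ∑ i, (n i : ℤ) := by
    push_cast
    rfl
  rw [h5, hsum, hprod, hs2]
end

section
/- For the 1×1 grid (a single square), the two 4×4 transition matrices P_h (with nonzero entries R_{00}, R_{01}, L_{10}, L_{11}) and P_v (with nonzero entries U_{00}, U_{10}, D_{01}, D_{11}) commute if and only if either P_h = 0, or P_v = 0, or the 2×4 matrix with rows (R_{00}, U_{00}, L_{11}, D_{11}) and (R_{01}, U_{10}, L_{10}, D_{01}) has rank at most 1. -/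
open Matrix Submodule Module

private lemma span_singleton_finrank_le_one {v : Fin 4 → ℝ} :
    finrank ℝ (span ℝ ({v} : Set (Fin 4 → ℝ))) ≤ 1 := by
  by_cases hv : v = 0
  · rw [hv, Submodule.span_zero_singleton]
    simp
  · rw [finrank_span_singleton hv]

private lemma rank_le_one_iff_minors (M : Matrix (Fin 2) (Fin 4) ℝ) :
    M.rank ≤ 1 ↔ ∀ i j : Fin 4, M 0 i * M 1 j = M 0 j * M 1 i := by
  constructor
  · intro h i j
    by_contra hne
    have hsub : M * (1 : Matrix (Fin 4) (Fin 4) ℝ).submatrix (Equiv.refl (Fin 4)) ![i, j]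
        = M.submatrix id ![i, j] := by
      simpa using Matrix.mul_submatrix_one (Equiv.refl (Fin 4)) ![i, j] M
    have hunit : IsUnit (M.submatrix id ![i, j]) := by
      rw [Matrix.isUnit_iff_isUnit_det, isUnit_iff_ne_zero, Matrix.det_fin_two]
      simp only [Matrix.submatrix_apply, id_eq, Matrix.cons_val_zero, Matrix.cons_val_one,
        Matrix.head_cons]
      intro hzero
      exact hne (by linarith)
    have h2 : (M.submatrix id ![i, j]).rank = 2 := by
      rw [Matrix.rank_of_isUnit _ hunit]; simp
    have hle : (M.submatrix id ![i, j]).rank ≤ M.rank := by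
      rw [← hsub]; exact Matrix.rank_mul_le_left _ _
    omega
  · intro h
    rw [Matrix.rank_eq_finrank_span_row]
    by_cases h0 : M 0 = 0
    · have hle : span ℝ (Set.range M) ≤ span ℝ ({M 1} : Set (Fin 4 → ℝ)) := by
        rw [Submodule.span_le]
        rintro x ⟨k, rfl⟩
        have hk : k = 0 ∨ k = 1 := by omega
        rcases hk with rfl | rfl
        · rw [h0]; exact zero_mem _
        · exact Submodule.subset_span rfl
      exact le_trans (Submodule.finrank_mono hle) span_singleton_finrank_le_one
    · obtain ⟨i, hi⟩ : ∃ i, M 0 i ≠ 0 := by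
        by_contra hc; push_neg at hc; exact h0 (funext hc)
      have h1 : M 1 = (M 1 i / M 0 i) • M 0 := by
        funext j
        simp only [Pi.smul_apply, smul_eq_mul]
        field_simp
        linear_combination h i j
      have hle : span ℝ (Set.range M) ≤ span ℝ ({M 0} : Set (Fin 4 → ℝ)) := by
        rw [Submodule.span_le]
        rintro x ⟨k, rfl⟩
        have hk : k = 0 ∨ k = 1 := by omega
        rcases hk with rfl | rfl
        · exact Submodule.subset_span rfl
        · rw [h1]
          exact Submodule.smul_mem _ _ (Submodule.subset_span rfl)
      exact le_trans (Submodule.finrank_mono hle) span_singleton_finrank_le_one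

/-- **Example 5.2.** On the `1×1` grid, the horizontal and vertical
transition matrices commute iff one of them is zero or the associated `2×4` matrix has
rank at most one. -/
theorem commute_iff_zero_or_rank_le_one (R00 R01 L10 L11 U00 U10 D01 D11 : ℝ)
    (Ph Pv : Matrix (Fin 2 × Fin 2) (Fin 2 × Fin 2) ℝ)
    (hPh : Ph = fun p q =>
      if p = (0, 0) ∧ q = (1, 0) then R00
      else if p = (0, 1) ∧ q = (1, 1) then R01
      else if p = (1, 0) ∧ q = (0, 0) then L10
      else if p = (1, 1) ∧ q = (0, 1) then L11 else 0)
    (hPv : Pv = fun p q =>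
      if p = (0, 0) ∧ q = (0, 1) then U00
      else if p = (1, 0) ∧ q = (1, 1) then U10
      else if p = (0, 1) ∧ q = (0, 0) then D01
      else if p = (1, 1) ∧ q = (1, 0) then D11 else 0) :
    Ph * Pv = Pv * Ph ↔
      Ph = 0 ∨ Pv = 0 ∨
        (!![R00, U00, L11, D11; R01, U10, L10, D01] : Matrix (Fin 2) (Fin 4) ℝ).rank ≤ 1 := by
  -- Reformulate `Ph = 0` and `Pv = 0`.
  have hPh0 : Ph = 0 ↔ R00 = 0 ∧ R01 = 0 ∧ L10 = 0 ∧ L11 = 0 := by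
    subst hPh
    constructor
    · intro h
      refine ⟨?_, ?_, ?_, ?_⟩
      · simpa using congrFun (congrFun h ((0 : Fin 2), (0 : Fin 2))) ((1 : Fin 2), (0 : Fin 2))
      · simpa using congrFun (congrFun h ((0 : Fin 2), (1 : Fin 2))) ((1 : Fin 2), (1 : Fin 2))
      · simpa using congrFun (congrFun h ((1 : Fin 2), (0 : Fin 2))) ((0 : Fin 2), (0 : Fin 2))
      · simpa using congrFun (congrFun h ((1 : Fin 2), (1 : Fin 2))) ((0 : Fin 2), (1 : Fin 2))
    · rintro ⟨h1, h2, h3, h4⟩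
      funext p q
      obtain ⟨a, b⟩ := p; obtain ⟨c, d⟩ := q
      fin_cases a <;> fin_cases b <;> fin_cases c <;> fin_cases d <;>
        simp [h1, h2, h3, h4, Prod.ext_iff]
  have hPv0 : Pv = 0 ↔ U00 = 0 ∧ U10 = 0 ∧ D01 = 0 ∧ D11 = 0 := by
    subst hPv
    constructor
    · intro h
      refine ⟨?_, ?_, ?_, ?_⟩
      · simpa using congrFun (congrFun h ((0 : Fin 2), (0 : Fin 2))) ((0 : Fin 2), (1 : Fin 2))
      · simpa using congrFun (congrFun h ((1 : Fin 2), (0 : Fin 2))) ((1 : Fin 2), (1 : Fin 2))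
      · simpa using congrFun (congrFun h ((0 : Fin 2), (1 : Fin 2))) ((0 : Fin 2), (0 : Fin 2))
      · simpa using congrFun (congrFun h ((1 : Fin 2), (1 : Fin 2))) ((1 : Fin 2), (0 : Fin 2))
    · rintro ⟨h1, h2, h3, h4⟩
      funext p q
      obtain ⟨a, b⟩ := p; obtain ⟨c, d⟩ := q
      fin_cases a <;> fin_cases b <;> fin_cases c <;> fin_cases d <;>
        simp [h1, h2, h3, h4, Prod.ext_iff]
  -- Reformulate the commutation relation.
  have hcomm : Ph * Pv = Pv * Ph ↔
      (R00 * U10 = U00 * R01 ∧ R01 * D11 = D01 * R00 ∧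
        L10 * U00 = U10 * L11 ∧ L11 * D01 = D11 * L10) := by
    rw [← Matrix.ext_iff]
    simp only [Matrix.mul_apply]
    subst hPh hPv
    constructor
    · intro h
      refine ⟨?_, ?_, ?_, ?_⟩
      · simpa [Matrix.mul_apply, Fintype.sum_prod_type, Fin.sum_univ_succ, Prod.ext_iff]
          using h ((0 : Fin 2), (0 : Fin 2)) ((1 : Fin 2), (1 : Fin 2))
      · simpa [Matrix.mul_apply, Fintype.sum_prod_type, Fin.sum_univ_succ, Prod.ext_iff]
          using h ((0 : Fin 2), (1 : Fin 2)) ((1 : Fin 2), (0 : Fin 2))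
      · simpa [Matrix.mul_apply, Fintype.sum_prod_type, Fin.sum_univ_succ, Prod.ext_iff]
          using h ((1 : Fin 2), (0 : Fin 2)) ((0 : Fin 2), (1 : Fin 2))
      · simpa [Matrix.mul_apply, Fintype.sum_prod_type, Fin.sum_univ_succ, Prod.ext_iff]
          using h ((1 : Fin 2), (1 : Fin 2)) ((0 : Fin 2), (0 : Fin 2))
    · rintro ⟨e1, e2, e3, e4⟩ p q
      obtain ⟨a, b⟩ := p; obtain ⟨c, d⟩ := q
      fin_cases a <;> fin_cases b <;> fin_cases c <;> fin_cases d <;>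
        simp [Matrix.mul_apply, Fintype.sum_prod_type, Fin.sum_univ_succ, Prod.ext_iff] <;>
        [exact e1; exact e2; exact e3; exact e4]
  -- Reformulate the rank condition.
  have hrank : (!![R00, U00, L11, D11; R01, U10, L10, D01] :
      Matrix (Fin 2) (Fin 4) ℝ).rank ≤ 1 ↔
      (R00 * U10 = U00 * R01 ∧ R00 * L10 = L11 * R01 ∧ R00 * D01 = D11 * R01 ∧
        U00 * L10 = L11 * U10 ∧ U00 * D01 = D11 * U10 ∧ L11 * D01 = D11 * L10) := by
    rw [rank_le_one_iff_minors]
    constructor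
    · intro h
      refine ⟨?_, ?_, ?_, ?_, ?_, ?_⟩
      · simpa [Matrix.cons_val_succ] using h 0 1
      · simpa [Matrix.cons_val_succ] using h 0 2
      · simpa [Matrix.cons_val_succ] using h 0 3
      · simpa [Matrix.cons_val_succ] using h 1 2
      · simpa [Matrix.cons_val_succ] using h 1 3
      · simpa [Matrix.cons_val_succ] using h 2 3
    · rintro ⟨m1, m2, m3, m4, m5, m6⟩ i j
      fin_cases i <;> fin_cases j <;> simp [Matrix.cons_val_succ] <;>
        linarith [m1, m2, m3, m4, m5, m6]
  rw [hcomm, hPh0, hPv0, hrank]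
  constructor
  · rintro ⟨e1, e2, e3, e4⟩
    by_cases hh : R00 = 0 ∧ R01 = 0 ∧ L10 = 0 ∧ L11 = 0
    · exact Or.inl hh
    by_cases hv : U00 = 0 ∧ U10 = 0 ∧ D01 = 0 ∧ D11 = 0
    · exact Or.inr (Or.inl hv)
    refine Or.inr (Or.inr ?_)
    -- derive the two "extra" minors
    have m5 : U00 * D01 = D11 * U10 := by
      rcases not_and_or.1 hh with h | h
      · exact mul_left_cancel₀ h (by linear_combination -U00 * e2 - D11 * e1)
      rcases not_and_or.1 h with h | h
      · exact mul_left_cancel₀ h (by linear_combination -D01 * e1 - U10 * e2)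
      rcases not_and_or.1 h with h | h
      · exact mul_left_cancel₀ h (by linear_combination D01 * e3 + U10 * e4)
      · exact mul_left_cancel₀ h (by linear_combination U00 * e4 + D11 * e3)
    have m2 : R00 * L10 = L11 * R01 := by
      rcases not_and_or.1 hv with h | h
      · exact mul_left_cancel₀ h (by linear_combination R00 * e3 + L11 * e1)
      rcases not_and_or.1 h with h | h
      · exact mul_left_cancel₀ h (by linear_combination L10 * e1 + R01 * e3)
      rcases not_and_or.1 h with h | h
      · exact mul_left_cancel₀ h (by linear_combination -L10 * e2 - R01 * e4)
      · exact mul_left_cancel₀ h (by linear_combination -R00 * e4 - L11 * e2)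
    exact ⟨e1, m2, by linear_combination -e2, by linear_combination e3, m5, by linear_combination e4⟩
  · rintro (⟨h1, h2, h3, h4⟩ | ⟨h1, h2, h3, h4⟩ | ⟨m1, m2, m3, m4, m5, m6⟩)
    · refine ⟨?_, ?_, ?_, ?_⟩ <;> simp [h1, h2, h3, h4]
    · refine ⟨?_, ?_, ?_, ?_⟩ <;> simp [h1, h2, h3, h4]
    · exact ⟨m1, by linear_combination -m3, by linear_combination m4, m6⟩
end
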